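/- arXiv:1704.08329 — 4 statements merged into one kernel-verified Lean document; each statement's English description precedes it below -/
import Mathlib

section
/- Let (W,S) be a Coxeter system and θ an involutive automorphism of (W,S). Then the set of twisted involutions 𝕀(θ) = {w ∈ W : θ(w) = w⁻¹} equals the orbit of the identity element under the right action of the free monoid on the alphabet {ŝ : s ∈ S}, where w·ŝ = ws if θ(s)ws = w and w·ŝ = θ(s)ws otherwise. -/
attribute [local instance] Classical.propDecidable
open CoxeterSystem List

variable {B : Type*} {M : CoxeterMatrix B} {W : Type*} [Group W]

/-- The right action of the symbol `ŝᵢ` on `w`: `w·ŝ = ws` if `θ(s)ws = w`, else `θ(s)ws`. -/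
noncomputable def twMul (cs : CoxeterSystem M W) (θ : W ≃* W) (w : W) (i : B) : W :=
  if θ (cs.simple i) * w * cs.simple i = w then w * cs.simple i
  else θ (cs.simple i) * w * cs.simple i

/-- The right action of a word in the symbols `ŝᵢ` on `w`. -/
noncomputable def twWord (cs : CoxeterSystem M W) (θ : W ≃* W) (w : W) (ω : List B) : W :=
  ω.foldl (twMul cs θ) w

/-- The set of twisted involutions `𝕀(θ) = {w : θ(w) = w⁻¹}`. -/
def TwistedInvolutions (θ : W ≃* W) : Set W := {w : W | θ w = w⁻¹}

/-- The rank of a twisted involution: the minimal length of an `Ŝ`-expression for it. -/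
noncomputable def twRank (cs : CoxeterSystem M W) (θ : W ≃* W) (w : W) : ℕ :=
  sInf {n | ∃ ω : List B, ω.length = n ∧ twWord cs θ 1 ω = w}

/-- `ω` is a reduced `Ŝ`-expression for `w`. -/
def IsReducedS (cs : CoxeterSystem M W) (θ : W ≃* W) (ω : List B) (w : W) : Prop :=
  twWord cs θ 1 ω = w ∧ ω.length = twRank cs θ w

/-- `w` is `(i,i')`-maximal: it has a reduced `Ŝ`-expression ending with the alternating
word `⋯ŝ'ŝ` of length `M i i'` (ending with `ŝᵢ`). -/
def IsMaximalS (cs : CoxeterSystem M W) (θ : W ≃* W) (w : W) (i i' : B) : Prop :=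
  ∃ ω : List B, IsReducedS cs θ (ω ++ alternatingWord i' i (M i i')) w

/-- The Bruhat order on `W`, via the subword property. -/
def BruhatLE (cs : CoxeterSystem M W) (u w : W) : Prop :=
  ∃ ω ω' : List B, cs.IsReduced ω ∧ cs.wordProd ω = w ∧ ω'.Sublist ω ∧ cs.wordProd ω' = u


noncomputable def twNu (t : W) (l : List W) : ZMod 2 :=
  (l.map fun u => if u = t then (1 : ZMod 2) else 0).sum

lemma twNu_nil (t : W) : twNu t ([] : List W) = 0 := rfl

lemma twNu_cons (t u : W) (l : List W) :
    twNu t (u :: l) = (if u = t then 1 else 0) + twNu t l := by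
  simp [twNu]

lemma twNu_concat (t u : W) (l : List W) :
    twNu t (l.concat u) = twNu t l + (if u = t then 1 else 0) := by
  simp [twNu]

lemma twNu_eq_zero_of_not_mem {t : W} {l : List W} (h : t ∉ l) : twNu t l = 0 := by
  induction l with
  | nil => rfl
  | cons u l ih =>
    rw [twNu_cons, if_neg (by rintro rfl; exact h mem_cons_self),
      ih (fun hm => h (mem_cons_of_mem _ hm)), add_zero]

lemma mem_of_twNu_ne_zero {t : W} {l : List W} (h : twNu t l ≠ 0) : t ∈ l := by
  by_contra hm; exact h (twNu_eq_zero_of_not_mem hm)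

lemma twNu_map_of_iff {t : W} {f : W → W} (hf : ∀ u, f u = t ↔ u = t) (l : List W) :
    twNu t (l.map f) = twNu t l := by
  induction l with
  | nil => rfl
  | cons u l ih =>
    rw [map_cons, twNu_cons, twNu_cons, ih]
    congr 1
    by_cases h : u = t
    · rw [if_pos h, if_pos ((hf u).mpr h)]
    · rw [if_neg h, if_neg (fun hc => h ((hf u).mp hc))]

noncomputable def twSig (cs : CoxeterSystem M W) (i : B) : Equiv.Perm (W × ZMod 2) :=
  Function.Involutive.toPerm
    (fun x => (cs.simple i * x.1 * cs.simple i, x.2 + if x.1 = cs.simple i then 1 else 0))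
    (by
      rintro ⟨t, ε⟩
      have h1 : cs.simple i * (cs.simple i * t * cs.simple i) * cs.simple i = t := by
        rw [← mul_assoc, ← mul_assoc, cs.simple_mul_simple_self, one_mul, mul_assoc,
          cs.simple_mul_simple_self, mul_one]
      have h2 : (cs.simple i * t * cs.simple i = cs.simple i) ↔ (t = cs.simple i) := by
        constructor
        · intro h
          have := congrArg (fun z => cs.simple i * z * cs.simple i) h
          rwa [h1, cs.simple_mul_simple_self, one_mul] at this
        · rintro rfl; rw [cs.simple_mul_simple_self, one_mul]
      ext
      · exact h1
      · show ε + _ + _ = ε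
        by_cases h : t = cs.simple i
        · rw [if_pos h, if_pos (h2.mpr h), add_assoc]
          norm_num
          exact CharTwo.add_self_eq_zero 1
        · rw [if_neg h, if_neg (fun hc => h (h2.mp hc)), add_zero, add_zero])

lemma twSig_apply (cs : CoxeterSystem M W) (i : B) (t : W) (ε : ZMod 2) :
    twSig cs i (t, ε) = (cs.simple i * t * cs.simple i, ε + if t = cs.simple i then 1 else 0) :=
  rfl

noncomputable def twF (cs : CoxeterSystem M W) (ω : List B) : Equiv.Perm (W × ZMod 2) :=
  (ω.map (twSig cs)).prod

lemma twF_nil (cs : CoxeterSystem M W) : twF cs [] = 1 := rfl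

lemma twF_cons (cs : CoxeterSystem M W) (j : B) (ω : List B) :
    twF cs (j :: ω) = twSig cs j * twF cs ω := by
  simp [twF]

lemma rightInvSeq_cons' (cs : CoxeterSystem M W) (j : B) (ω : List B) :
    cs.rightInvSeq (j :: ω) =
      ((cs.wordProd ω)⁻¹ * cs.simple j * cs.wordProd ω) :: cs.rightInvSeq ω := rfl

lemma twF_apply (cs : CoxeterSystem M W) (ω : List B) (t : W) (ε : ZMod 2) :
    twF cs ω (t, ε) =
      (cs.wordProd ω * t * (cs.wordProd ω)⁻¹, ε + twNu t (cs.rightInvSeq ω)) := by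
  induction ω generalizing ε with
  | nil => simp [twF_nil, twNu_nil, wordProd_nil]
  | cons j ω ih =>
    rw [twF_cons, Equiv.Perm.mul_apply, ih, twSig_apply, rightInvSeq_cons', twNu_cons,
      wordProd_cons]
    have hiff : (cs.wordProd ω * t * (cs.wordProd ω)⁻¹ = cs.simple j) ↔
        ((cs.wordProd ω)⁻¹ * cs.simple j * cs.wordProd ω = t) := by
      constructor
      · intro h; rw [← h]; group
      · intro h; rw [← h]; group
    ext
    · show cs.simple j * (cs.wordProd ω * t * (cs.wordProd ω)⁻¹) * cs.simple j = _
      rw [mul_inv_rev, cs.inv_simple]; group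
    · show ε + twNu t (cs.rightInvSeq ω) + _ = ε + (_ + twNu t (cs.rightInvSeq ω))
      by_cases h : cs.wordProd ω * t * (cs.wordProd ω)⁻¹ = cs.simple j
      · rw [if_pos h, if_pos (hiff.mp h)]; ring
      · rw [if_neg h, if_neg (fun hc => h (hiff.mpr hc))]; ring
section
variable (cs : CoxeterSystem M W)

lemma twYconj (i i' : B) : ∀ a : ℕ,
    cs.simple i' * (cs.simple i * cs.simple i') ^ a
      = ((cs.simple i * cs.simple i') ^ a)⁻¹ * cs.simple i' := by
  intro a
  have hyp : cs.simple i' * (cs.simple i * cs.simple i')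
      = (cs.simple i * cs.simple i')⁻¹ * cs.simple i' := by
    rw [mul_inv_rev, cs.inv_simple, cs.inv_simple, mul_assoc]
  induction a with
  | zero => simp
  | succ a ih =>
    calc cs.simple i' * (cs.simple i * cs.simple i') ^ (a + 1)
        = (cs.simple i' * (cs.simple i * cs.simple i') ^ a) * (cs.simple i * cs.simple i') := by
          rw [pow_succ, mul_assoc]
      _ = ((cs.simple i * cs.simple i') ^ a)⁻¹
            * (cs.simple i' * (cs.simple i * cs.simple i')) := by rw [ih, mul_assoc]
      _ = ((cs.simple i * cs.simple i') ^ (a + 1))⁻¹ * cs.simple i' := by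
          rw [hyp, ← mul_assoc, ← mul_inv_rev, ← pow_succ']

/-- Closed form for the entries of the right inversion sequence of an alternating word. -/
lemma twG (i i' : B) (n : ℕ) :
    (cs.wordProd (alternatingWord i i' n))⁻¹ * cs.simple (if Even n then i' else i)
        * cs.wordProd (alternatingWord i i' n)
      = ((cs.simple i * cs.simple i') ^ n)⁻¹ * cs.simple i' := by
  set x := cs.simple i
  set y := cs.simple i'
  set p := x * y with hp
  rcases Nat.even_or_odd n with he | ho
  · obtain ⟨a, rfl⟩ := he
    have hd : (a + a) / 2 = a := by omega
    rw [cs.prod_alternatingWord_eq_mul_pow, if_pos ⟨a, rfl⟩, if_pos ⟨a, rfl⟩, hd, one_mul]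
    have : y * p ^ a = (p ^ a)⁻¹ * y := twYconj cs i i' a
    rw [show (p ^ a)⁻¹ * y * p ^ a = (p ^ a)⁻¹ * (y * p ^ a) by group, this, pow_add]
    group
  · obtain ⟨a, rfl⟩ := ho
    have hne : ¬ Even (2 * a + 1) := by simp [Nat.even_add_one, Nat.even_mul]
    have hd : (2 * a + 1) / 2 = a := by omega
    rw [cs.prod_alternatingWord_eq_mul_pow, if_neg hne, if_neg hne, hd]
    have hyx : y * x * y = p⁻¹ * y := by
      rw [hp, mul_inv_rev, cs.inv_simple, cs.inv_simple, mul_assoc]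
    calc (y * p ^ a)⁻¹ * x * (y * p ^ a)
        = (p ^ a)⁻¹ * (y⁻¹ * x * y) * p ^ a := by group
      _ = (p ^ a)⁻¹ * (y * x * y) * p ^ a := by rw [cs.inv_simple]
      _ = (p ^ a)⁻¹ * (p⁻¹ * (y * p ^ a)) := by rw [hyx]; group
      _ = (p ^ a)⁻¹ * (p⁻¹ * (((p ^ a)⁻¹) * y)) := by rw [twYconj cs i i' a]
      _ = (p ^ (2 * a + 1))⁻¹ * y := by rw [two_mul, pow_add, pow_add, pow_one]; group

lemma twNu_ris_alt (i i' : B) (t : W) : ∀ k : ℕ,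
    twNu t (cs.rightInvSeq (alternatingWord i i' k))
      = ∑ n ∈ Finset.range k,
          (if ((cs.simple i * cs.simple i') ^ n)⁻¹ * cs.simple i' = t then (1 : ZMod 2) else 0) := by
  intro k
  induction k with
  | zero => simp [alternatingWord, twNu_nil]
  | succ k ih =>
    rw [alternatingWord_succ', rightInvSeq_cons', twNu_cons, ih, Finset.sum_range_succ,
      twG cs i i', add_comm]

lemma twNu_ris_alt_zero (i i' : B) (t : W) :
    twNu t (cs.rightInvSeq (alternatingWord i i' (2 * M i i'))) = 0 := by
  have hm : (cs.simple i * cs.simple i') ^ (M i i') = 1 := cs.simple_mul_simple_pow i i'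
  rw [twNu_ris_alt, two_mul]
  set f : ℕ → ZMod 2 := fun n =>
    if ((cs.simple i * cs.simple i') ^ n)⁻¹ * cs.simple i' = t then (1 : ZMod 2) else 0 with hf
  have hper : ∀ n, f (M i i' + n) = f n := by
    intro n
    simp only [hf, pow_add, hm, one_mul]
  have hsplit : ∑ n ∈ Finset.range (M i i' + M i i'), f n
      = ∑ n ∈ Finset.range (M i i'), f n + ∑ n ∈ Finset.range (M i i'), f (M i i' + n) := by
    rw [Finset.sum_range_add]
  rw [hsplit]
  simp only [hper]
  exact CharTwo.add_self_eq_zero _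

lemma twLiftable : CoxeterMatrix.IsLiftable M (twSig cs) := by
  intro i i'
  have halt : ∀ m : ℕ, twF cs (alternatingWord i i' (2 * m)) = (twSig cs i * twSig cs i') ^ m := by
    intro m
    induction m with
    | zero => simp [alternatingWord, twF_nil]
    | succ m ih =>
      have h2 : 2 * (m + 1) = (2 * m + 1) + 1 := by ring
      have he : ¬ Even (2 * m + 1) := by simp [Nat.even_add_one, Nat.even_mul]
      have ho : Even (2 * m) := ⟨m, by ring⟩
      rw [h2, alternatingWord_succ', if_neg he, alternatingWord_succ', if_pos ho, twF_cons,
        twF_cons, ih, pow_succ']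
      rw [mul_assoc]
  apply Equiv.ext
  rintro ⟨t, ε⟩
  rw [← halt (M i i'), twF_apply]
  have hprod : cs.wordProd (alternatingWord i i' (2 * M i i')) = 1 := by
    rw [cs.prod_alternatingWord_eq_mul_pow, if_pos ⟨M i i', by ring⟩, one_mul,
      Nat.mul_div_cancel_left _ (by norm_num : 0 < 2), cs.simple_mul_simple_pow]
  rw [hprod, twNu_ris_alt_zero, add_zero, Equiv.Perm.one_apply]
  simp

noncomputable def twPhi : W →* Equiv.Perm (W × ZMod 2) := cs.lift ⟨twSig cs, twLiftable cs⟩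

lemma twPhi_wordProd (ω : List B) : twPhi cs (cs.wordProd ω) = twF cs ω := by
  induction ω with
  | nil => rw [wordProd_nil, map_one, twF_nil]
  | cons j ω ih =>
    rw [wordProd_cons, map_mul, ih, twF_cons, twPhi, cs.lift_apply_simple]

lemma twNu_ris_congr {ω ω' : List B} (h : cs.wordProd ω = cs.wordProd ω') (t : W) :
    twNu t (cs.rightInvSeq ω) = twNu t (cs.rightInvSeq ω') := by
  have h2 : twF cs ω (t, 0) = twF cs ω' (t, 0) := by
    rw [← twPhi_wordProd, ← twPhi_wordProd, h]
  rw [twF_apply, twF_apply] at h2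
  have := congrArg Prod.snd h2
  simpa using this

end
section
variable (cs : CoxeterSystem M W)

lemma twNu_of_rightDescent {w : W} {i : B} (hi : cs.IsRightDescent w i) {ω : List B}
    (hω : cs.wordProd ω = w) : twNu (cs.simple i) (cs.rightInvSeq ω) = 1 := by
  obtain ⟨α, hαred, hαw⟩ := cs.exists_reduced_word' (w * cs.simple i)
  have hΩ : cs.wordProd (α.concat i) = w := by
    rw [wordProd_concat, ← hαw, cs.simple_mul_simple_cancel_right]
  rw [twNu_ris_congr cs (hω.trans hΩ.symm)]
  have hnotmem : cs.simple i ∉ cs.rightInvSeq α := by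
    intro hmem
    have h2 := (cs.isRightInversion_of_mem_rightInvSeq hαred hmem).2
    rw [← hαw, cs.simple_mul_simple_cancel_right] at h2
    exact absurd hi (by rw [CoxeterSystem.IsRightDescent]; omega)
  rw [cs.rightInvSeq_concat, twNu_concat,
    twNu_map_of_iff (fun u => by
      constructor
      · intro h
        have := congrArg (fun z => (cs.simple i)⁻¹ * z * cs.simple i) h
        simp only [MulAut.conj_apply] at this
        group at this
        simpa using this
      · rintro rfl; simp),
    twNu_eq_zero_of_not_mem hnotmem, if_pos rfl, zero_add]

lemma twLeftExchange {u : W} {j : B} (hj : cs.IsLeftDescent u j) {Ω : List B}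
    (hred : cs.IsReduced Ω) (hu : cs.wordProd Ω = u) :
    ∃ k < Ω.length, cs.simple j * u = cs.wordProd (Ω.eraseIdx k) := by
  have hrev : cs.wordProd Ω.reverse = u⁻¹ := by rw [wordProd_reverse, hu]
  have hd : cs.IsRightDescent u⁻¹ j := by
    rw [CoxeterSystem.IsRightDescent, ← cs.length_inv, mul_inv_rev, inv_inv, cs.inv_simple,
      cs.length_inv u]
    exact hj
  have h1 : twNu (cs.simple j) (cs.rightInvSeq Ω.reverse) = 1 := twNu_of_rightDescent cs hd hrev
  have hmem : cs.simple j ∈ cs.rightInvSeq Ω.reverse := by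
    apply mem_of_twNu_ne_zero
    rw [h1]; exact one_ne_zero
  rw [cs.rightInvSeq_reverse, List.mem_reverse] at hmem
  obtain ⟨k, hk, hkeq⟩ := List.mem_iff_getElem.mp hmem
  have hgetD : (cs.leftInvSeq Ω).getD k 1 = cs.simple j := by
    rw [List.getD_eq_getElem _ _ hk, hkeq]
  have := cs.getD_leftInvSeq_mul_wordProd Ω k
  rw [hgetD, hu] at this
  exact ⟨k, by simpa using hk, this⟩

lemma twDichotomy {w : W} {i j : B} (hi : cs.IsRightDescent w i) (hj : cs.IsLeftDescent w j)
    (hne : cs.simple j * w * cs.simple i ≠ w) :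
    cs.length (cs.simple j * w * cs.simple i) < cs.length w := by
  by_contra hge
  push_neg at hge
  have h1 : cs.length (cs.simple j * w) + 1 = cs.length w := (cs.isLeftDescent_iff).mp hj
  have h2 : cs.length (w * cs.simple i) + 1 = cs.length w := (cs.isRightDescent_iff).mp hi
  have hv : cs.length (cs.simple j * w * cs.simple i) = cs.length w := by
    rcases cs.length_mul_simple (cs.simple j * w) i with h | h
    · omega
    · omega
  obtain ⟨α, hαred, hαw⟩ := cs.exists_reduced_word' (cs.simple j * w)
  have hαlen : α.length + 1 = cs.length w := by
    rw [CoxeterSystem.IsReduced] at hαred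
    rw [← hαred, ← hαw]; exact h1
  have hΩprod : cs.wordProd (α.concat i) = cs.simple j * w * cs.simple i := by
    rw [wordProd_concat, ← hαw]
  have hΩred : cs.IsReduced (α.concat i) := by
    rw [CoxeterSystem.IsReduced, hΩprod, hv, List.length_concat]
    omega
  have hjv : cs.IsLeftDescent (cs.simple j * w * cs.simple i) j := by
    rw [CoxeterSystem.IsLeftDescent, ← mul_assoc, cs.simple_mul_simple_cancel_left, hv]
    omega
  obtain ⟨k, hk, hkeq⟩ := twLeftExchange cs hjv hΩred hΩprod
  rw [← mul_assoc, cs.simple_mul_simple_cancel_left] at hkeq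
  rw [List.length_concat] at hk
  rcases Nat.lt_or_ge k α.length with hlt | hge'
  · rw [List.concat_eq_append, List.eraseIdx_append_of_lt_length hlt, wordProd_append,
      wordProd_singleton] at hkeq
    have hw : w = cs.wordProd (α.eraseIdx k) := mul_right_cancel hkeq
    have hle := cs.length_wordProd_le (α.eraseIdx k)
    rw [← hw] at hle
    have := List.length_eraseIdx_add_one hlt
    omega
  · have hke : k = α.length := by omega
    subst hke
    rw [List.concat_eq_append, List.eraseIdx_append_of_length_le (le_refl _)] at hkeq
    simp only [Nat.sub_self, List.eraseIdx_cons_zero, List.append_nil] at hkeq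
    rw [← hαw] at hkeq
    apply hne
    rw [← hkeq, cs.simple_mul_simple_cancel_right]

end
section
variable (cs : CoxeterSystem M W) (θ : W ≃* W)

lemma twTheta_wordProd (σ : B → B) (hσ : ∀ i : B, θ (cs.simple i) = cs.simple (σ i)) :
    ∀ ω : List B, θ (cs.wordProd ω) = cs.wordProd (ω.map σ) := by
  intro ω
  induction ω with
  | nil => simp [wordProd_nil]
  | cons j ω ih => rw [wordProd_cons, map_mul, ih, hσ, List.map_cons, wordProd_cons]

lemma twTheta_length (hθ : ∀ w : W, θ (θ w) = w) (σ : B → B)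
    (hσ : ∀ i : B, θ (cs.simple i) = cs.simple (σ i)) (w : W) :
    cs.length (θ w) = cs.length w := by
  have key : ∀ v : W, cs.length (θ v) ≤ cs.length v := by
    intro v
    obtain ⟨ω, hred, hv⟩ := cs.exists_reduced_word' v
    rw [hv, twTheta_wordProd cs θ σ hσ]
    calc cs.length (cs.wordProd (ω.map σ)) ≤ (ω.map σ).length := cs.length_wordProd_le _
      _ = ω.length := List.length_map _
      _ = cs.length (cs.wordProd ω) := hred.symm
  have h2 := key (θ w)
  rw [hθ] at h2
  exact le_antisymm (key w) h2

lemma twMul_preserves (hθ : ∀ w : W, θ (θ w) = w) (σ : B → B)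
    (hσ : ∀ i : B, θ (cs.simple i) = cs.simple (σ i)) {w : W} (hw : θ w = w⁻¹) (i : B) :
    θ (twMul cs θ w i) = (twMul cs θ w i)⁻¹ := by
  rw [twMul]
  split_ifs with h
  · have h2 : θ (cs.simple i) * w = w * cs.simple i := by
      have := congrArg (fun z => z * cs.simple i) h
      simpa [mul_assoc, cs.simple_mul_simple_self] using this
    rw [map_mul, hw, mul_inv_rev, cs.inv_simple]
    rw [show θ (cs.simple i) = w * cs.simple i * w⁻¹ from by rw [← h2]; group]
    group
  · rw [map_mul, map_mul, hθ, hw, mul_inv_rev, mul_inv_rev, cs.inv_simple, hσ, cs.inv_simple]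
    group

lemma twWord_nil (w : W) : twWord cs θ w [] = w := rfl

lemma twWord_cons (w : W) (i : B) (ω : List B) :
    twWord cs θ w (i :: ω) = twWord cs θ (twMul cs θ w i) ω := rfl

lemma twWord_append_singleton (w : W) (ω : List B) (i : B) :
    twWord cs θ w (ω ++ [i]) = twMul cs θ (twWord cs θ w ω) i := by
  simp [twWord, List.foldl_append]

lemma twWord_preserves (hθ : ∀ w : W, θ (θ w) = w) (σ : B → B)
    (hσ : ∀ i : B, θ (cs.simple i) = cs.simple (σ i)) :
    ∀ (ω : List B) (w : W), θ w = w⁻¹ → θ (twWord cs θ w ω) = (twWord cs θ w ω)⁻¹ := by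
  intro ω
  induction ω with
  | nil => intro w hw; exact hw
  | cons i ω ih =>
    intro w hw
    rw [twWord_cons]
    exact ih _ (twMul_preserves cs θ hθ σ hσ hw i)

lemma twMain (hθ : ∀ w : W, θ (θ w) = w) (σ : B → B)
    (hσ : ∀ i : B, θ (cs.simple i) = cs.simple (σ i)) :
    ∀ n (w : W), cs.length w ≤ n → θ w = w⁻¹ → ∃ ω : List B, twWord cs θ 1 ω = w := by
  intro n
  induction n with
  | zero =>
    intro w hn htw
    have : w = 1 := cs.length_eq_zero_iff.mp (Nat.le_zero.mp hn)
    exact ⟨[], this.symm⟩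
  | succ n ih =>
    intro w hn htw
    by_cases hw1 : w = 1
    · exact ⟨[], hw1.symm⟩
    obtain ⟨i, hi⟩ := cs.exists_rightDescent_of_ne_one hw1
    have hiRD : cs.length (w * cs.simple i) < cs.length w := hi
    have hcalc : θ (cs.simple i * w⁻¹) = θ (cs.simple i) * w := by
      rw [map_mul, map_inv, htw, inv_inv]
    have hlen_tw : cs.length (θ (cs.simple i) * w) = cs.length (w * cs.simple i) := by
      rw [← hcalc, twTheta_length cs θ hθ σ hσ,
        show cs.simple i * w⁻¹ = (w * cs.simple i)⁻¹ from by rw [mul_inv_rev, cs.inv_simple],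
        cs.length_inv]
    have hld : cs.IsLeftDescent w (σ i) := by
      rw [CoxeterSystem.IsLeftDescent, ← hσ, hlen_tw]
      exact hi
    by_cases hcase : θ (cs.simple i) * w * cs.simple i = w
    · set u := w * cs.simple i with hu
      have htwmul : twMul cs θ w i = u := by rw [twMul, if_pos hcase]
      have hutw : θ u = u⁻¹ := by
        rw [← htwmul]; exact twMul_preserves cs θ hθ σ hσ htw i
      have hulen : cs.length u ≤ n := by have h3 := hiRD; omega
      obtain ⟨ω, hω⟩ := ih u hulen hutw
      refine ⟨ω ++ [i], ?_⟩
      rw [twWord_append_singleton, hω, twMul, if_pos ?_]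
      · rw [hu, cs.simple_mul_simple_cancel_right]
      · rw [show θ (cs.simple i) * u * cs.simple i
            = (θ (cs.simple i) * w * cs.simple i) * cs.simple i from by rw [hu]; group, hcase, hu]
    · set u := θ (cs.simple i) * w * cs.simple i with hu
      have htwmul : twMul cs θ w i = u := by rw [twMul, if_neg hcase]
      have hutw : θ u = u⁻¹ := by
        rw [← htwmul]; exact twMul_preserves cs θ hθ σ hσ htw i
      have hkey : θ (cs.simple i) * u * cs.simple i = w := by
        rw [hu, show θ (cs.simple i) * (θ (cs.simple i) * w * cs.simple i) * cs.simple i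
            = (θ (cs.simple i) * θ (cs.simple i)) * w * (cs.simple i * cs.simple i) from by group,
          hσ, cs.simple_mul_simple_self, cs.simple_mul_simple_self, one_mul, mul_one]
      have hulen : cs.length u ≤ n := by
        have hlt := twDichotomy cs hi hld (by rw [← hσ]; exact hcase)
        rw [← hσ] at hlt
        rw [hu]
        omega
      obtain ⟨ω, hω⟩ := ih u hulen hutw
      refine ⟨ω ++ [i], ?_⟩
      rw [twWord_append_singleton, hω, twMul, if_neg ?_, hkey]
      intro hcontra
      rw [hkey] at hcontra
      exact hcase (by rw [hu] at hcontra; exact hcontra.symm)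

end

/-- the set of twisted involutions equals the orbit of the identity under the
right action of the free monoid on `{ŝ : s ∈ S}`. -/
theorem twistedInvolutions_eq_orbit (cs : CoxeterSystem M W) (θ : W ≃* W)
    (hθ : ∀ w : W, θ (θ w) = w) (σ : B → B)
    (hσ : ∀ i : B, θ (cs.simple i) = cs.simple (σ i)) :
    TwistedInvolutions θ = {w : W | ∃ ω : List B, twWord cs θ 1 ω = w} := by
  ext w
  simp only [TwistedInvolutions, Set.mem_setOf_eq]
  constructor
  · intro htw
    exact twMain cs θ hθ σ hσ (cs.length w) w le_rfl htw
  · rintro ⟨ω, rfl⟩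
    exact twWord_preserves cs θ hθ σ hσ ω 1 (by rw [map_one, inv_one])
end

section
/- Let w ∈ 𝕀(θ) and s ∈ S. Then the rank ρ(w·ŝ) equals ρ(w) + 1 or ρ(w) − 1, where ρ(u) denotes the minimum length of a word ŝ₁⋯ŝₖ in the monoid alphabet with e·ŝ₁⋯ŝₖ = u. -/
attribute [local instance] Classical.propDecidable
open CoxeterSystem List

variable {B : Type*} {M : CoxeterMatrix B} {W : Type*} [Group W]

noncomputable section TwAux
namespace TwAux

open Finsupp

variable {B : Type*} {M : CoxeterMatrix B} {W : Type*} [Group W]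

/-- Coefficients of the standard bilinear form. -/
def kk (M : CoxeterMatrix B) (a b : B) : ℝ := -2 * Real.cos (Real.pi / (M a b : ℝ))

lemma kk_symm (a b : B) : kk M a b = kk M b a := by rw [kk, kk, M.symmetric]

lemma kk_diag (a : B) : kk M a a = 2 := by
  simp [kk, M.diagonal a]

lemma kk_of_zero {a b : B} (h : M a b = 0) : kk M a b = -2 := by
  simp [kk, h]

lemma kk_nonpos {a b : B} (h : 2 ≤ M a b) : kk M a b ≤ 0 := by
  have h1 : (0:ℝ) < (M a b : ℝ) := by positivity
  have : 0 ≤ Real.cos (Real.pi / (M a b : ℝ)) := by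
    apply Real.cos_nonneg_of_mem_Icc
    constructor
    · have := Real.pi_pos
      have : 0 ≤ Real.pi / (M a b : ℝ) := by positivity
      linarith [Real.pi_pos]
    · rw [div_le_div_iff₀ h1 (by norm_num : (0:ℝ) < 2)]
      have : (2:ℝ) ≤ (M a b : ℝ) := by exact_mod_cast h
      nlinarith [Real.pi_pos]
  simp only [kk]
  nlinarith

lemma kk_gt_neg_two {a b : B} (h : 2 ≤ M a b) : -2 < kk M a b := by
  have h1 : (0:ℝ) < (M a b : ℝ) := by positivity
  have h2 : (2:ℝ) ≤ (M a b : ℝ) := by exact_mod_cast h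
  have hx1 : 0 < Real.pi / (M a b : ℝ) := by positivity
  have hx2 : Real.pi / (M a b : ℝ) < 2 * Real.pi := by
    rw [div_lt_iff₀ h1]
    nlinarith [Real.pi_pos]
  have hne : Real.cos (Real.pi / (M a b : ℝ)) ≠ 1 := by
    intro hc
    have := (Real.cos_eq_one_iff_of_lt_of_lt (by linarith) hx2).mp hc
    linarith
  have hle := Real.cos_le_one (Real.pi / (M a b : ℝ))
  have : Real.cos (Real.pi / (M a b : ℝ)) < 1 := lt_of_le_of_ne hle hne
  simp only [kk]
  nlinarith

/-- basis vector -/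
def es (b : B) : B →₀ ℝ := Finsupp.single b 1

lemma es_ne_zero (b : B) : es b ≠ 0 := by
  intro h
  have := DFunLike.congr_fun h b
  simp [es] at this

/-- the linear functional `v ↦ B(v, e_b)`. -/
def fLin (M : CoxeterMatrix B) (b : B) : (B →₀ ℝ) →ₗ[ℝ] ℝ :=
  Finsupp.linearCombination ℝ (fun a => kk M a b)

lemma fLin_single (a b : B) (x : ℝ) : fLin M b (Finsupp.single a x) = x * kk M a b := by
  simp [fLin, Finsupp.linearCombination_single, smul_eq_mul]

lemma fLin_es (a b : B) : fLin M b (es a) = kk M a b := by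
  simp [es, fLin_single]

/-- the simple reflection on `B →₀ ℝ`. -/
def sig (M : CoxeterMatrix B) (b : B) : Module.End ℝ (B →₀ ℝ) :=
  LinearMap.id - (fLin M b).smulRight (es b)

lemma sig_apply (b : B) (v : B →₀ ℝ) : sig M b v = v - fLin M b v • es b := rfl

lemma sig_es_self (b : B) : sig M b (es b) = -(es b) := by
  rw [sig_apply, fLin_es, kk_diag]
  module

lemma sig_es (a b : B) : sig M b (es a) = es a - kk M a b • es b := by
  rw [sig_apply, fLin_es]

lemma fLin_sig_self (b : B) (v : B →₀ ℝ) : fLin M b (sig M b v) = -(fLin M b v) := by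
  rw [sig_apply, map_sub, map_smul, fLin_es, kk_diag]
  ring_nf

lemma sig_invol (b : B) (v : B →₀ ℝ) : sig M b (sig M b v) = v := by
  conv_lhs => rw [sig_apply b (sig M b v)]
  rw [fLin_sig_self, sig_apply, neg_smul, sub_neg_eq_add, sub_add_cancel]

lemma sig_mul_self (b : B) : sig M b * sig M b = 1 := by
  apply LinearMap.ext
  intro v
  simp only [Module.End.mul_apply, Module.End.one_apply]
  exact sig_invol b v

/-- the bilinear form -/
def BF (M : CoxeterMatrix B) : (B →₀ ℝ) →ₗ[ℝ] (B →₀ ℝ) →ₗ[ℝ] ℝ :=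
  Finsupp.linearCombination ℝ (fun a => fLin M a)

lemma BF_single_left (a : B) (x : ℝ) (w : B →₀ ℝ) :
    BF M (Finsupp.single a x) w = x * fLin M a w := by
  rw [BF, Finsupp.linearCombination_single]
  simp [smul_eq_mul]

lemma BF_es_left (a : B) (w : B →₀ ℝ) : BF M (es a) w = fLin M a w := by
  simp [es, BF_single_left]

lemma BF_symm (v w : B →₀ ℝ) : BF M v w = BF M w v := by
  have : (BF M) = (BF M).flip := by
    apply Finsupp.lhom_ext
    intro a x
    apply Finsupp.lhom_ext
    intro b y
    simp only [LinearMap.flip_apply]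
    rw [BF_single_left, BF_single_left, fLin_single, fLin_single, kk_symm]
    ring
  conv_lhs => rw [this]
  rfl

lemma BF_es_right (b : B) (v : B →₀ ℝ) : BF M v (es b) = fLin M b v := by
  rw [BF_symm, BF_es_left]

lemma BF_sig (b : B) (v w : B →₀ ℝ) : BF M (sig M b v) (sig M b w) = BF M v w := by
  rw [sig_apply, sig_apply]
  simp only [map_sub, map_smul, LinearMap.sub_apply, LinearMap.smul_apply, smul_eq_mul]
  rw [BF_es_left, BF_es_right, BF_es_left, fLin_es, kk_diag]
  ring

/-- Chebyshev-like sequence -/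
def useq (c : ℝ) : ℕ → ℝ
  | 0 => 0
  | 1 => 1
  | (n+2) => -c * useq c (n+1) - useq c n

lemma useq_sin (φ : ℝ) (n : ℕ) :
    useq (-2 * Real.cos φ) n * Real.sin φ = Real.sin (n * φ) := by
  induction n using Nat.twoStepInduction with
  | zero => simp [useq]
  | one => simp [useq]
  | more n ih1 ih2 =>
    show (-(-2 * Real.cos φ) * useq (-2 * Real.cos φ) (n+1) - useq (-2 * Real.cos φ) n)
        * Real.sin φ = _
    have h1 : ((n + 2 : ℕ) : ℝ) * φ = ((n+1 : ℕ) : ℝ) * φ + φ := by push_cast; ring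
    have h2 : ((n : ℕ) : ℝ) * φ = ((n+1 : ℕ) : ℝ) * φ - φ := by push_cast; ring
    rw [h1, Real.sin_add]
    rw [h2, Real.sin_sub] at ih1
    linear_combination (2 * Real.cos φ) * ih2 - ih1

lemma useq_neg_two (n : ℕ) : useq (-2) n = n := by
  induction n using Nat.twoStepInduction with
  | zero => simp [useq]
  | one => simp [useq]
  | more n ih1 ih2 =>
    show -(-2) * useq (-2) (n+1) - useq (-2) n = _
    rw [ih1, ih2]; push_cast; ring

section mfacts

variable {m : ℕ} (hm : 2 ≤ m)

lemma phi_pos (hm : 2 ≤ m) : 0 < Real.pi / (m : ℝ) := by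
  have h0 : (0:ℝ) < m := by exact_mod_cast (by omega : 0 < m)
  exact div_pos Real.pi_pos h0

lemma phi_lt_pi (hm : 2 ≤ m) : Real.pi / (m : ℝ) < Real.pi := by
  have h2 : (2:ℝ) ≤ (m : ℝ) := by exact_mod_cast hm
  rw [div_lt_iff₀ (by linarith)]
  nlinarith [Real.pi_pos]

lemma sin_phi_pos (hm : 2 ≤ m) : 0 < Real.sin (Real.pi / (m : ℝ)) :=
  Real.sin_pos_of_pos_of_lt_pi (phi_pos hm) (phi_lt_pi hm)

lemma useq_m_nonneg (hm : 2 ≤ m) {n : ℕ} (hn : n ≤ m) :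
    0 ≤ useq (-2 * Real.cos (Real.pi / (m : ℝ))) n := by
  set φ := Real.pi / (m : ℝ)
  have hs := useq_sin φ n
  have hsin : 0 ≤ Real.sin ((n : ℝ) * φ) := by
    apply Real.sin_nonneg_of_nonneg_of_le_pi
    · have := phi_pos (m := m) hm; positivity
    · have hmpos : (0:ℝ) < m := by positivity
      have hn' : (n : ℝ) ≤ (m : ℝ) := by exact_mod_cast hn
      calc (n:ℝ) * φ ≤ (m:ℝ) * φ := by
            apply mul_le_mul_of_nonneg_right hn' (le_of_lt (phi_pos hm))
        _ = Real.pi := by simp only [φ]; field_simp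
  have hφ := sin_phi_pos hm
  nlinarith [hs]

lemma useq_two_m (hm : 2 ≤ m) : useq (-2 * Real.cos (Real.pi / (m : ℝ))) (2 * m) = 0 := by
  set φ := Real.pi / (m : ℝ)
  have hs := useq_sin φ (2 * m)
  have hmne : (m:ℝ) ≠ 0 := by exact_mod_cast (by omega : m ≠ 0)
  have h2 : ((2 * m : ℕ) : ℝ) * φ = 2 * Real.pi := by
    push_cast; linear_combination (2 * Real.pi) * (mul_inv_cancel₀ hmne)
  rw [h2, Real.sin_two_pi] at hs
  have hφ := sin_phi_pos hm
  exact by nlinarith [hs]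

lemma useq_two_m_add_one (hm : 2 ≤ m) :
    useq (-2 * Real.cos (Real.pi / (m : ℝ))) (2 * m + 1) = 1 := by
  set φ := Real.pi / (m : ℝ)
  have hs := useq_sin φ (2 * m + 1)
  have hmne : (m:ℝ) ≠ 0 := by exact_mod_cast (by omega : m ≠ 0)
  have h2 : ((2 * m + 1 : ℕ) : ℝ) * φ = φ + 2 * Real.pi := by
    push_cast; linear_combination (2 * Real.pi) * (mul_inv_cancel₀ hmne)
  rw [h2, Real.sin_add_two_pi] at hs
  have hφ := sin_phi_pos hm
  have : (useq (-2 * Real.cos φ) (2 * m + 1) - 1) * Real.sin φ = 0 := by nlinarith [hs]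
  rcases mul_eq_zero.mp this with h | h
  · linarith
  · exact absurd h (ne_of_gt hφ)

lemma useq_two_m_sub_one (hm : 2 ≤ m) :
    useq (-2 * Real.cos (Real.pi / (m : ℝ))) (2 * m - 1) = -1 := by
  set φ := Real.pi / (m : ℝ)
  have hs := useq_sin φ (2 * m - 1)
  have hmne : (m:ℝ) ≠ 0 := by exact_mod_cast (by omega : m ≠ 0)
  have h2 : ((2 * m - 1 : ℕ) : ℝ) * φ = 2 * Real.pi - φ := by
    have : ((2 * m - 1 : ℕ) : ℝ) = 2 * (m:ℝ) - 1 := by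
      have : 1 ≤ 2 * m := by omega
      push_cast [Nat.cast_sub this]; ring
    rw [this]; linear_combination (2 * Real.pi) * (mul_inv_cancel₀ hmne)
  rw [h2, Real.sin_two_pi_sub] at hs
  have hφ := sin_phi_pos hm
  have : (useq (-2 * Real.cos φ) (2 * m - 1) + 1) * Real.sin φ = 0 := by nlinarith [hs]
  rcases mul_eq_zero.mp this with h | h
  · linarith
  · exact absurd h (ne_of_gt hφ)

end mfacts

section alt

variable (M) in
/-- product of simple reflections along an alternating word -/
def altEnd (i j : B) (k : ℕ) : Module.End ℝ (B →₀ ℝ) :=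
  ((CoxeterSystem.alternatingWord i j k).map (sig M)).prod

lemma altEnd_zero (i j : B) : altEnd M i j 0 = 1 := rfl

lemma altEnd_succ (i j : B) (k : ℕ) :
    altEnd M i j (k+1) = sig M (if Even k then j else i) * altEnd M i j k := by
  rw [altEnd, CoxeterSystem.alternatingWord_succ', List.map_cons, List.prod_cons, altEnd]

lemma useq_rec (c : ℝ) (k : ℕ) : useq c (k+2) = -c * useq c (k+1) - useq c k := rfl

lemma altEnd_es_i {i j : B} (hij : i ≠ j) (k : ℕ) :
    altEnd M i j k (es i) =
      (if Even k then useq (kk M i j) (k+1) else useq (kk M i j) k) • es i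
      + (if Even k then useq (kk M i j) k else useq (kk M i j) (k+1)) • es j := by
  induction k with
  | zero => simp [altEnd_zero, useq]
  | succ k ih =>
    rcases Nat.even_or_odd k with hk | hk
    · have h1 : ¬ Even (k+1) := by simp [Nat.even_add_one, hk]
      rw [altEnd_succ, if_pos hk, Module.End.mul_apply, ih, if_pos hk, if_pos hk,
        if_neg h1, if_neg h1]
      rw [map_add, map_smul, map_smul, sig_es, sig_es_self]
      rw [useq_rec]
      module
    · have h1 : Even (k+1) := by simp [Nat.even_add_one, Nat.not_even_iff_odd.mpr hk]
      have h2 : ¬ Even k := Nat.not_even_iff_odd.mpr hk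
      rw [altEnd_succ, if_neg h2, Module.End.mul_apply, ih, if_neg h2, if_neg h2,
        if_pos h1, if_pos h1]
      rw [map_add, map_smul, map_smul, sig_es_self i, sig_es j i, kk_symm j i]
      rw [useq_rec]
      module

lemma altEnd_es_j {i j : B} (hij : i ≠ j) (k : ℕ) :
    altEnd M i j (k+1) (es j) =
      (-(if Even (k+1) then useq (kk M i j) (k+1) else useq (kk M i j) k)) • es i
      + (-(if Even (k+1) then useq (kk M i j) k else useq (kk M i j) (k+1))) • es j := by
  induction k with
  | zero =>
    have : ¬ Even 1 := by decide
    rw [altEnd_succ, if_pos (by decide : Even 0), altEnd_zero, if_neg this, if_neg this]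
    simp [Module.End.mul_apply, sig_es_self, useq]
  | succ k ih =>
    rcases Nat.even_or_odd k with hk | hk
    · -- k even, k+1 odd, operator at step k+1 is sig i
      have h1 : ¬ Even (k+1) := by simp [Nat.even_add_one, hk]
      have h2 : Even (k+2) := by simp [Nat.even_add_one, h1]
      rw [altEnd_succ, if_neg h1, Module.End.mul_apply, ih, if_neg h1, if_neg h1,
        if_pos h2, if_pos h2]
      rw [map_add, map_smul, map_smul, sig_es_self i, sig_es j i, kk_symm j i]
      rw [useq_rec]
      module
    · have h2 : Even (k+1) := by simp [Nat.even_add_one, Nat.not_even_iff_odd.mpr hk]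
      have h3 : ¬ Even (k+2) := by simp [Nat.even_add_one, h2]
      rw [altEnd_succ, if_pos h2, Module.End.mul_apply, ih, if_pos h2, if_pos h2,
        if_neg h3, if_neg h3]
      rw [map_add, map_smul, map_smul, sig_es, sig_es_self]
      rw [useq_rec]
      module

lemma pow_eq_altEnd (i j : B) (r : ℕ) :
    (sig M i * sig M j)^r = altEnd M i j (2*r) := by
  induction r with
  | zero => simp [altEnd_zero]
  | succ r ih =>
    have e1 : 2*(r+1) = (2*r+1)+1 := by omega
    rw [pow_succ', ih, e1, altEnd_succ, altEnd_succ]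
    have h1 : ¬ Even (2*r+1) := by simp [Nat.even_add_one]
    have h2 : Even (2*r) := by simp
    rw [if_neg h1, if_pos h2, mul_assoc]

lemma altEnd_fixes {i j : B} {v : B →₀ ℝ} (hvi : fLin M i v = 0) (hvj : fLin M j v = 0)
    (k : ℕ) : altEnd M i j k v = v := by
  induction k with
  | zero => rfl
  | succ k ih =>
    rw [altEnd_succ, Module.End.mul_apply, ih]
    split
    · rw [sig_apply, hvj, zero_smul, sub_zero]
    · rw [sig_apply, hvi, zero_smul, sub_zero]

lemma sig_pow_simple {i j : B} (hij : i ≠ j) (hm : 2 ≤ M i j) :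
    (sig M i * sig M j)^(M i j) = 1 := by
  rw [pow_eq_altEnd]
  apply LinearMap.ext
  intro v
  have hcform : kk M i j = -2 * Real.cos (Real.pi / (M i j : ℝ)) := rfl
  have hc0 : kk M i j ≤ 0 := kk_nonpos hm
  have hc2 : -2 < kk M i j := kk_gt_neg_two hm
  have hd : (4 : ℝ) - (kk M i j)^2 ≠ 0 := by nlinarith
  set p := fLin M i v with hp
  set q := fLin M j v with hq
  set x := (2*p - kk M i j * q)/(4 - (kk M i j)^2) with hx
  set y := (2*q - kk M i j * p)/(4 - (kk M i j)^2) with hy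
  have hvi : fLin M i (v - x • es i - y • es j) = 0 := by
    simp only [map_sub, map_smul, smul_eq_mul, fLin_es, kk_diag, kk_symm j i, ← hp]
    rw [hx, hy]
    field_simp
    ring
  have hvj : fLin M j (v - x • es i - y • es j) = 0 := by
    simp only [map_sub, map_smul, smul_eq_mul, fLin_es, kk_diag, ← hq]
    rw [hx, hy]
    field_simp
    ring
  have hev : Even (2*(M i j)) := even_two_mul _
  have hei : altEnd M i j (2*(M i j)) (es i) = es i := by
    rw [altEnd_es_i hij, if_pos hev, if_pos hev, hcform, useq_two_m_add_one hm, useq_two_m hm]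
    module
  have e0 : 2*(M i j) = (2*(M i j)-1)+1 := by omega
  have hej : altEnd M i j (2*(M i j)) (es j) = es j := by
    rw [e0, altEnd_es_j hij, ← e0, if_pos hev, if_pos hev, hcform, useq_two_m hm,
      useq_two_m_sub_one hm]
    module
  have hsplit : v = (v - x • es i - y • es j) + x • es i + y • es j := by abel
  conv_lhs => rw [hsplit]
  rw [map_add, map_add, map_smul, map_smul, altEnd_fixes hvi hvj, hei, hej,
    Module.End.one_apply]
  abel

lemma isLiftable_sig : M.IsLiftable (fun b => sig M b) := by
  intro i j
  by_cases hij : i = j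
  · subst hij
    rw [M.diagonal, pow_one, sig_mul_self]
  · rcases Nat.eq_zero_or_pos (M i j) with h0 | hpos
    · rw [h0, pow_zero]
    · have hm : 2 ≤ M i j := by
        have := M.off_diagonal i j hij
        omega
      exact sig_pow_simple hij hm

end alt

section rep

variable (cs : CoxeterSystem M W)

/-- The geometric representation. -/
def pirep : W →* Module.End ℝ (B →₀ ℝ) := cs.lift ⟨fun b => sig M b, isLiftable_sig⟩

lemma pirep_simple (b : B) : pirep cs (cs.simple b) = sig M b :=
  cs.lift_apply_simple isLiftable_sig b

lemma pirep_invol (w : W) (v : B →₀ ℝ) : pirep cs w (pirep cs w⁻¹ v) = v := by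
  have : pirep cs w * pirep cs w⁻¹ = 1 := by
    rw [← map_mul, mul_inv_cancel, map_one]
  calc pirep cs w (pirep cs w⁻¹ v) = (pirep cs w * pirep cs w⁻¹) v := rfl
    _ = v := by rw [this]; rfl

lemma pirep_inj_es {w : W} {b : B} (h : pirep cs w (es b) = 0) : False := by
  have := congrArg (pirep cs w⁻¹) h
  rw [map_zero] at this
  have h2 : pirep cs w⁻¹ (pirep cs w (es b)) = es b := by
    have : pirep cs w⁻¹ * pirep cs w = 1 := by
      rw [← map_mul, inv_mul_cancel, map_one]
    calc pirep cs w⁻¹ (pirep cs w (es b)) = (pirep cs w⁻¹ * pirep cs w) (es b) := rfl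
      _ = es b := by rw [this]; rfl
  rw [this] at h2
  exact es_ne_zero b h2.symm

lemma BF_pirep (w : W) (v v' : B →₀ ℝ) :
    BF M (pirep cs w v) (pirep cs w v') = BF M v v' := by
  induction w using cs.simple_induction generalizing v v' with
  | simple i =>
    rw [pirep_simple]
    exact BF_sig i v v'
  | one => simp
  | mul w w' ih ih' =>
    rw [map_mul]
    calc BF M ((pirep cs w * pirep cs w') v) ((pirep cs w * pirep cs w') v')
        = BF M (pirep cs w (pirep cs w' v)) (pirep cs w (pirep cs w' v')) := rfl
      _ = BF M (pirep cs w' v) (pirep cs w' v') := ih _ _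
      _ = BF M v v' := ih' _ _

lemma pirep_pow_simple_pair (i j : B) (k : ℕ) :
    pirep cs ((cs.simple i * cs.simple j)^k) = altEnd M i j (2*k) := by
  rw [map_pow, map_mul, pirep_simple, pirep_simple, pow_eq_altEnd]

/-- The key faithfulness-flavored fact: the order of `sᵢ sⱼ` is governed by `M i j`. -/
lemma simple_pair_pow_eq_one_iff (i j : B) (k : ℕ) :
    (cs.simple i * cs.simple j)^k = 1 ↔ M i j ∣ k := by
  by_cases hij : i = j
  · subst hij
    rw [cs.simple_mul_simple_self, one_pow, M.diagonal]
    simp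
  constructor
  · intro h
    have h2 : altEnd M i j (2*k) = 1 := by
      rw [← pirep_pow_simple_pair cs, h, map_one]
    have h3 := DFunLike.congr_fun h2 (es i)
    rw [altEnd_es_i hij, if_pos (even_two_mul _), if_pos (even_two_mul _),
      Module.End.one_apply] at h3
    have hcj := DFunLike.congr_fun h3 j
    have hci := DFunLike.congr_fun h3 i
    simp only [Finsupp.add_apply, Finsupp.smul_apply, smul_eq_mul, es] at hcj hci
    rw [Finsupp.single_eq_of_ne' hij, Finsupp.single_eq_same] at hcj
    rw [Finsupp.single_eq_same, Finsupp.single_eq_of_ne' (Ne.symm hij)] at hci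
    -- hcj : useq (kk M i j) (2*k+1) * 0 + useq (kk M i j) (2*k) * 1 = 0
    -- hci : useq (kk M i j) (2*k+1) * 1 + useq (kk M i j) (2*k) * 0 = 1
    have h2k : useq (kk M i j) (2*k) = 0 := by linarith
    have h2k1 : useq (kk M i j) (2*k+1) = 1 := by linarith
    rcases Nat.eq_zero_or_pos (M i j) with h0 | hpos
    · rw [h0]
      rw [kk_of_zero h0, useq_neg_two] at h2k
      have : 2*k = 0 := by exact_mod_cast h2k
      omega
    · have hm : 2 ≤ M i j := by
        have := M.off_diagonal i j hij
        omega
      have hcform : kk M i j = -2 * Real.cos (Real.pi / (M i j : ℝ)) := rfl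
      rw [hcform] at h2k h2k1
      set φ := Real.pi / (M i j : ℝ) with hφ
      have hsφ := sin_phi_pos hm
      have hs := useq_sin φ (2*k)
      rw [h2k, zero_mul] at hs
      obtain ⟨n, hn⟩ := Real.sin_eq_zero_iff.mp hs.symm
      -- (n : ℝ) * π = (2k) * (π / m)  ⟹ n * m = 2 * k
      have hmne : ((M i j : ℕ) : ℝ) ≠ 0 := by
        exact_mod_cast (by omega : M i j ≠ 0)
      have hmφ : (M i j : ℝ) * φ = Real.pi := by rw [hφ]; field_simp
      have h5 : (n:ℝ) * (M i j:ℝ) * Real.pi = (2*(k:ℝ)) * Real.pi := by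
        calc (n:ℝ) * (M i j:ℝ) * Real.pi = ((n:ℝ) * Real.pi) * (M i j:ℝ) := by ring
          _ = (((2*k : ℕ):ℝ) * φ) * (M i j : ℝ) := by rw [hn]
          _ = ((2*k : ℕ):ℝ) * ((M i j : ℝ) * φ) := by ring
          _ = (2*(k:ℝ)) * Real.pi := by rw [hmφ]; push_cast; ring
      have hnm : (n : ℝ) * (M i j : ℝ) = 2 * (k : ℝ) := mul_right_cancel₀ Real.pi_ne_zero h5
      have hnm' : n * (M i j : ℤ) = 2 * (k : ℤ) := by exact_mod_cast hnm
      have hdvd2 : (M i j : ℤ) ∣ 2 * (k : ℤ) := ⟨n, by linarith [hnm']⟩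
      -- now rule out odd multiplier
      by_contra hnd
      have hdvd2' : (M i j) ∣ 2 * k := by
        have := Int.ofNat_dvd.mp (by exact_mod_cast hdvd2)
        exact_mod_cast this
      obtain ⟨t, ht⟩ := hdvd2'
      have htodd : ¬ Even t := by
        rintro ⟨r, hr⟩
        apply hnd
        have h2' : 2*k = 2*(M i j * r) := by rw [ht, hr]; ring
        exact ⟨r, Nat.eq_of_mul_eq_mul_left (by norm_num) h2'⟩
      obtain ⟨r, hr⟩ := Nat.not_even_iff_odd.mp htodd
      have hs1 := useq_sin φ (2*k+1)
      rw [h2k1, one_mul] at hs1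
      have hk' : ((2*k : ℕ) : ℝ) = (M i j : ℝ) * (t : ℝ) := by exact_mod_cast ht
      have ht' : (t : ℝ) = 2*(r:ℝ)+1 := by exact_mod_cast hr
      have harg : ((2*k+1 : ℕ) : ℝ) * φ = (φ + Real.pi) + (r : ℤ) * (2 * Real.pi) := by
        calc ((2*k+1:ℕ):ℝ)*φ = ((2*k:ℕ):ℝ)*φ + φ := by push_cast; ring
          _ = ((M i j:ℝ) * (t:ℝ))*φ + φ := by rw [hk']
          _ = (t:ℝ) * ((M i j:ℝ)*φ) + φ := by ring
          _ = (t:ℝ) * Real.pi + φ := by rw [hmφ]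
          _ = (2*(r:ℝ)+1)*Real.pi + φ := by rw [ht']
          _ = (φ + Real.pi) + ((r:ℤ):ℝ) * (2*Real.pi) := by push_cast; ring
      rw [harg, Real.sin_add_int_mul_two_pi, Real.sin_add_pi] at hs1
      linarith
  · rintro ⟨t, rfl⟩
    rw [pow_mul, cs.simple_mul_simple_pow, one_pow]

lemma simple_inj : Function.Injective cs.simple := by
  intro i j h
  by_contra hij
  have : (cs.simple i * cs.simple j)^1 = 1 := by
    rw [pow_one, h, cs.simple_mul_simple_self]
  have hdvd := (simple_pair_pow_eq_one_iff cs i j 1).mp this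
  exact M.off_diagonal i j hij (Nat.dvd_one.mp hdvd)

end rep

section theta

variable (cs : CoxeterSystem M W) (θ : W ≃* W) (σ : B → B)

lemma sigma_sigma (hθ : ∀ w : W, θ (θ w) = w)
    (hσ : ∀ i : B, θ (cs.simple i) = cs.simple (σ i)) (i : B) : σ (σ i) = i := by
  apply simple_inj cs
  rw [← hσ, ← hσ, hθ]

lemma M_sigma (hσ : ∀ i : B, θ (cs.simple i) = cs.simple (σ i)) (i j : B) :
    M (σ i) (σ j) = M i j := by
  apply Nat.dvd_antisymm
  · apply (simple_pair_pow_eq_one_iff cs (σ i) (σ j) (M i j)).mp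
    rw [← hσ, ← hσ, ← map_mul, ← map_pow, cs.simple_mul_simple_pow, map_one]
  · apply (simple_pair_pow_eq_one_iff cs i j (M (σ i) (σ j))).mp
    have h1 : (cs.simple (σ i) * cs.simple (σ j)) ^ (M (σ i) (σ j)) = 1 :=
      cs.simple_mul_simple_pow _ _
    rw [← hσ, ← hσ, ← map_mul, ← map_pow] at h1
    have h2 := congrArg θ.symm h1
    rw [MulEquiv.symm_apply_apply, map_one] at h2
    exact h2

lemma kk_sigma (hσ : ∀ i : B, θ (cs.simple i) = cs.simple (σ i)) (a b : B) :
    kk M (σ a) (σ b) = kk M a b := by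
  rw [kk, kk, M_sigma cs θ σ hσ]

/-- Θ̂, the permutation action on the representation space. -/
def Th (σ : B → B) : Module.End ℝ (B →₀ ℝ) := Finsupp.lmapDomain ℝ ℝ σ

lemma Th_es (b : B) : Th σ (es b) = es (σ b) := by
  simp [Th, es, Finsupp.lmapDomain_apply, Finsupp.mapDomain_single]

lemma Th_Th (hθ : ∀ w : W, θ (θ w) = w)
    (hσ : ∀ i : B, θ (cs.simple i) = cs.simple (σ i)) : Th σ * Th σ = 1 := by
  apply Finsupp.lhom_ext
  intro a x
  simp [Th, Module.End.mul_apply, Finsupp.lmapDomain_apply, Finsupp.mapDomain_single,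
    sigma_sigma cs θ σ hθ hσ]

lemma fLin_Th (hσ : ∀ i : B, θ (cs.simple i) = cs.simple (σ i)) (b : B) (v : B →₀ ℝ) :
    fLin M (σ b) (Th σ v) = fLin M b v := by
  have : (fLin M (σ b)).comp (Th σ) = fLin M b := by
    apply Finsupp.lhom_ext
    intro a x
    simp only [LinearMap.comp_apply, Th, Finsupp.lmapDomain_apply, Finsupp.mapDomain_single]
    rw [fLin_single, fLin_single, kk_sigma cs θ σ hσ]
  exact DFunLike.congr_fun this v

lemma BF_Th (hθ : ∀ w : W, θ (θ w) = w)
    (hσ : ∀ i : B, θ (cs.simple i) = cs.simple (σ i)) (v w : B →₀ ℝ) :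
    BF M (Th σ v) (Th σ w) = BF M v w := by
  have h : ∀ a : B, σ (σ a) = a := sigma_sigma cs θ σ hθ hσ
  have : ((BF M).comp (Th σ)).compl₂ (Th σ) = BF M := by
    apply Finsupp.lhom_ext
    intro a x
    apply Finsupp.lhom_ext
    intro b y
    simp only [LinearMap.compl₂_apply, LinearMap.comp_apply, Th, Finsupp.lmapDomain_apply,
      Finsupp.mapDomain_single]
    rw [BF_single_left, BF_single_left, fLin_single, fLin_single, kk_sigma cs θ σ hσ]
  exact DFunLike.congr_fun (DFunLike.congr_fun this v) w

lemma Th_sig (hθ : ∀ w : W, θ (θ w) = w)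
    (hσ : ∀ i : B, θ (cs.simple i) = cs.simple (σ i)) (b : B) :
    Th σ * sig M b * Th σ = sig M (σ b) := by
  apply LinearMap.ext
  intro v
  simp only [Module.End.mul_apply]
  rw [sig_apply, map_sub, map_smul, Th_es]
  have hb : σ (σ b) = b := sigma_sigma cs θ σ hθ hσ b
  have h1 : fLin M b (Th σ v) = fLin M (σ b) v := by
    conv_lhs => rw [← hb]
    rw [fLin_Th cs θ σ hσ]
  rw [h1, sig_apply]
  have hv : Th σ (Th σ v) = v := by
    have := DFunLike.congr_fun (Th_Th cs θ σ hθ hσ) v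
    simpa [Module.End.mul_apply] using this
  rw [hv]

lemma pirep_theta (hθ : ∀ w : W, θ (θ w) = w)
    (hσ : ∀ i : B, θ (cs.simple i) = cs.simple (σ i)) (w : W) :
    pirep cs (θ w) = Th σ * pirep cs w * Th σ := by
  have hTT : Th σ * Th σ = 1 := Th_Th cs θ σ hθ hσ
  let ψ : W →* Module.End ℝ (B →₀ ℝ) :=
    { toFun := fun w => Th σ * pirep cs w * Th σ
      map_one' := by simp only [map_one, mul_one]; exact hTT
      map_mul' := by
        intro a b
        simp only [map_mul]
        calc Th σ * (pirep cs a * pirep cs b) * Th σ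
            = Th σ * pirep cs a * (Th σ * Th σ) * pirep cs b * Th σ := by
              rw [hTT]; simp only [mul_one, mul_assoc]
          _ = (Th σ * pirep cs a * Th σ) * (Th σ * pirep cs b * Th σ) := by
              noncomm_ring }
  have : (pirep cs).comp θ.toMonoidHom = ψ := by
    apply cs.ext_simple
    intro b
    simp only [MonoidHom.comp_apply, MulEquiv.coe_toMonoidHom, ψ, MonoidHom.coe_mk,
      OneHom.coe_mk]
    rw [hσ, pirep_simple, pirep_simple, Th_sig cs θ σ hθ hσ]
  exact DFunLike.congr_fun this w

lemma theta_wordProd (hσ : ∀ i : B, θ (cs.simple i) = cs.simple (σ i)) (ω : List B) :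
    θ (cs.wordProd ω) = cs.wordProd (ω.map σ) := by
  induction ω with
  | nil => simp [cs.wordProd_nil]
  | cons a ω ih =>
    rw [cs.wordProd_cons, map_mul, hσ, ih, List.map_cons, cs.wordProd_cons]

lemma length_theta (hθ : ∀ w : W, θ (θ w) = w)
    (hσ : ∀ i : B, θ (cs.simple i) = cs.simple (σ i)) (w : W) :
    cs.length (θ w) = cs.length w := by
  have key : ∀ u : W, cs.length (θ u) ≤ cs.length u := by
    intro u
    obtain ⟨ω, hlen, hω⟩ := cs.exists_reduced_word u
    rw [hω, theta_wordProd cs θ σ hσ]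
    calc cs.length (cs.wordProd (ω.map σ)) ≤ (ω.map σ).length := cs.length_wordProd_le _
      _ = ω.length := List.length_map _
      _ = cs.length (cs.wordProd ω) := by exact hlen.symm
  apply le_antisymm (key w)
  have := key (θ w)
  rwa [hθ] at this

end theta

section positivity

variable (cs : CoxeterSystem M W)

/-- positivity (coordinatewise) -/
def Pos (v : B →₀ ℝ) : Prop := ∀ b, 0 ≤ v b

lemma pos_es (b : B) : Pos (es b) := by
  intro b'
  rw [es]
  rcases eq_or_ne b b' with rfl | h
  · rw [Finsupp.single_eq_same]; norm_num
  · rw [Finsupp.single_eq_of_ne' h]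

lemma pos_comb {v w : B →₀ ℝ} {a b : ℝ} (hv : Pos v) (hw : Pos w) (ha : 0 ≤ a) (hb : 0 ≤ b) :
    Pos (a • v + b • w) := by
  intro b'
  rw [Finsupp.add_apply, Finsupp.smul_apply, Finsupp.smul_apply, smul_eq_mul, smul_eq_mul]
  have := hv b'
  have := hw b'
  nlinarith

lemma pirep_wordProd (ω : List B) : pirep cs (cs.wordProd ω) = (ω.map (sig M)).prod := by
  rw [CoxeterSystem.wordProd, map_list_prod, List.map_map]
  congr 1
  apply List.map_congr_left
  intro b _
  exact pirep_simple cs b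

lemma alt_zero (i j : B) : CoxeterSystem.alternatingWord i j 0 = [] := rfl

lemma alt_one (i j : B) : CoxeterSystem.alternatingWord i j 1 = [j] := by
  rw [CoxeterSystem.alternatingWord_succ, alt_zero]
  rfl

lemma chain_rel (w : W) (i j : B) (k : ℕ) :
    w * (cs.wordProd (CoxeterSystem.alternatingWord i j k))⁻¹
      = (w * (cs.wordProd (CoxeterSystem.alternatingWord i j (k+1)))⁻¹)
        * cs.simple (if Even k then j else i) := by
  rw [CoxeterSystem.alternatingWord_succ', cs.wordProd_cons, mul_inv_rev, cs.inv_simple,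
    mul_assoc, mul_assoc, cs.simple_mul_simple_self, mul_one]

lemma chain_step (w : W) (i j : B) (k : ℕ)
    (h : cs.length (w * (cs.wordProd (CoxeterSystem.alternatingWord i j (k+1)))⁻¹) + (k+1)
        = cs.length w) :
    cs.length (w * (cs.wordProd (CoxeterSystem.alternatingWord i j k))⁻¹) + k
      = cs.length w := by
  have hrel := chain_rel cs w i j k
  have h1 : cs.length (w * (cs.wordProd (CoxeterSystem.alternatingWord i j k))⁻¹)
      ≤ cs.length (w * (cs.wordProd (CoxeterSystem.alternatingWord i j (k+1)))⁻¹) + 1 := by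
    rw [hrel]
    calc cs.length _ ≤ _ + cs.length (cs.simple (if Even k then j else i)) :=
          cs.length_mul_le _ _
      _ = _ + 1 := by rw [cs.length_simple]
  have h2 : cs.length w
      ≤ cs.length (w * (cs.wordProd (CoxeterSystem.alternatingWord i j k))⁻¹) + k := by
    have : w = (w * (cs.wordProd (CoxeterSystem.alternatingWord i j k))⁻¹)
        * cs.wordProd (CoxeterSystem.alternatingWord i j k) := by group
    conv_lhs => rw [this]
    calc cs.length _ ≤ _ + cs.length (cs.wordProd (CoxeterSystem.alternatingWord i j k)) :=
          cs.length_mul_le _ _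
      _ ≤ _ + k := by
          have := cs.length_wordProd_le (CoxeterSystem.alternatingWord i j k)
          rw [CoxeterSystem.length_alternatingWord] at this
          omega
  omega

lemma chain_down (w : W) (i j : B) {a b : ℕ} (hab : a ≤ b)
    (h : cs.length (w * (cs.wordProd (CoxeterSystem.alternatingWord i j b))⁻¹) + b
        = cs.length w) :
    cs.length (w * (cs.wordProd (CoxeterSystem.alternatingWord i j a))⁻¹) + a
      = cs.length w := by
  induction b with
  | zero =>
    have : a = 0 := by omega
    subst this; exact h
  | succ b ih =>
    rcases Nat.lt_or_ge a (b+1) with hlt | hge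
    · exact ih (by omega) (chain_step cs w i j b h)
    · have : a = b + 1 := by omega
      subst this; exact h

lemma braid_flip (w : W) (i j : B) (hm : M i j ≠ 0)
    (h : cs.length (w * (cs.wordProd (CoxeterSystem.alternatingWord i j (M i j)))⁻¹) + (M i j)
        = cs.length w) :
    cs.IsRightDescent w i := by
  have hb : cs.wordProd (CoxeterSystem.alternatingWord i j (M i j))
      = cs.wordProd (CoxeterSystem.alternatingWord j i (M j i)) := cs.wordProd_braidWord_eq i j
  rw [hb, M.symmetric i j] at h
  have hm' : M j i ≠ 0 := by rw [M.symmetric j i]; exact hm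
  have h1 := chain_down cs w j i (by omega : 1 ≤ M j i) h
  rw [alt_one, cs.wordProd_singleton, cs.inv_simple] at h1
  rw [cs.isRightDescent_iff]
  omega

theorem pirep_pos : ∀ n (w : W) (i : B), cs.length w = n →
    ¬ cs.IsRightDescent w i → Pos (pirep cs w (es i)) := by
  intro n
  induction n using Nat.strong_induction_on with
  | _ n IH =>
  intro w i hn hasc
  rcases eq_or_ne w 1 with rfl | hw
  · rw [map_one, Module.End.one_apply]
    exact pos_es i
  obtain ⟨j, hj⟩ := cs.exists_rightDescent_of_ne_one hw
  have hij : j ≠ i := by rintro rfl; exact hasc hj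
  have hlw : 1 ≤ cs.length w := by
    have := cs.length_eq_zero_iff (w := w)
    rcases Nat.eq_zero_or_pos (cs.length w) with h0 | h1
    · exact absurd (this.mp h0) hw
    · omega
  set C : ℕ → Prop := fun k =>
    cs.length (w * (cs.wordProd (CoxeterSystem.alternatingWord i j k))⁻¹) + k = cs.length w
    with hCdef
  have hC1 : C 1 := by
    show cs.length (w * (cs.wordProd (CoxeterSystem.alternatingWord i j 1))⁻¹) + 1 = cs.length w
    rw [alt_one, cs.wordProd_singleton, cs.inv_simple]
    exact cs.isRightDescent_iff.mp hj
  have hqC : C (Nat.findGreatest C (cs.length w)) := Nat.findGreatest_spec hlw hC1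
  have hq1 : 1 ≤ Nat.findGreatest C (cs.length w) := Nat.le_findGreatest hlw hC1
  obtain ⟨q', hq'⟩ : ∃ q', Nat.findGreatest C (cs.length w) = q'+1 :=
    ⟨Nat.findGreatest C (cs.length w) - 1, by omega⟩
  rw [hq'] at hqC
  set v := w * (cs.wordProd (CoxeterSystem.alternatingWord i j (q'+1)))⁻¹ with hv
  have hlv : cs.length v + (q'+1) = cs.length w := hqC
  have hlt : cs.length v < cs.length w := by omega
  -- ascent at the "next" letter
  have hstuck : ¬ cs.IsRightDescent v (if Even (q'+1) then j else i) := by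
    intro hdesc
    have hrel := chain_rel cs w i j (q'+1)
    have hC2 : cs.length (w * (cs.wordProd (CoxeterSystem.alternatingWord i j (q'+2)))⁻¹)
        + (q'+2) = cs.length w := by
      have hd := cs.isRightDescent_iff.mp hdesc
      rw [← hv] at hrel
      -- hrel : v = (w * (π alt (q'+2))⁻¹) * s_c
      have heq : w * (cs.wordProd (CoxeterSystem.alternatingWord i j (q'+1+1)))⁻¹
          = v * cs.simple (if Even (q'+1) then j else i) := by
        rw [hrel]
        rw [mul_assoc, cs.simple_mul_simple_self, mul_one]
      rw [show q'+2 = q'+1+1 from rfl, heq]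
      omega
    have hle : q'+2 ≤ cs.length w := by omega
    exact Nat.findGreatest_is_greatest (by omega) hle (show C (q'+2) from hC2)
  have hprev : ¬ cs.IsRightDescent v (if Even q' then j else i) := by
    have hCq' : C q' := chain_down cs w i j (by omega) hqC
    have hrel := chain_rel cs w i j q'
    rw [← hv] at hrel
    rw [cs.not_isRightDescent_iff, ← hrel]
    omega
  have hascI : ¬ cs.IsRightDescent v i := by
    rcases Nat.even_or_odd q' with he | ho
    · have : ¬ Even (q'+1) := by simp [Nat.even_add_one, he]
      simpa [this] using hstuck
    · have : ¬ Even q' := Nat.not_even_iff_odd.mpr ho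
      simpa [this] using hprev
  have hascJ : ¬ cs.IsRightDescent v j := by
    rcases Nat.even_or_odd q' with he | ho
    · simpa [he] using hprev
    · have h1 : Even (q'+1) := by
        simp [Nat.even_add_one, Nat.not_even_iff_odd.mpr ho]
      simpa [h1] using hstuck
  have hPi : Pos (pirep cs v (es i)) := IH (cs.length v) (by omega) v i rfl hascI
  have hPj : Pos (pirep cs v (es j)) := IH (cs.length v) (by omega) v j rfl hascJ
  -- bound on q'
  have hqm : M i j = 0 ∨ q'+1+1 ≤ M i j := by
    by_contra hcon
    push_neg at hcon
    obtain ⟨hm0, hmlt⟩ := hcon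
    have hmle : M i j ≤ q'+1 := by omega
    have hCm : C (M i j) := chain_down cs w i j hmle hqC
    exact hasc (braid_flip cs w i j hm0 hCm)
  -- coefficients of the alternating word action
  have hij' : i ≠ j := Ne.symm hij
  have hcoefi : ∀ k, k ≤ q'+1 → 0 ≤ useq (kk M i j) k := by
    intro k hk
    rcases hqm with h0 | hbound
    · rw [kk_of_zero h0, useq_neg_two]
      positivity
    · have hm2 : 2 ≤ M i j := by
        have := M.off_diagonal i j hij'
        omega
      have hcform : kk M i j = -2 * Real.cos (Real.pi / (M i j : ℝ)) := rfl
      rw [hcform]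
      exact useq_m_nonneg hm2 (by omega)
  have habe : pirep cs (cs.wordProd (CoxeterSystem.alternatingWord i j (q'+1))) (es i)
      = (if Even (q'+1) then useq (kk M i j) (q'+1+1) else useq (kk M i j) (q'+1)) • es i
        + (if Even (q'+1) then useq (kk M i j) (q'+1) else useq (kk M i j) (q'+1+1)) • es j := by
    rw [pirep_wordProd]
    exact altEnd_es_i hij' (q'+1)
  have hwv : w = v * cs.wordProd (CoxeterSystem.alternatingWord i j (q'+1)) := by
    rw [hv]; group
  have hfinal : pirep cs w (es i)
      = (if Even (q'+1) then useq (kk M i j) (q'+1+1) else useq (kk M i j) (q'+1))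
          • pirep cs v (es i)
        + (if Even (q'+1) then useq (kk M i j) (q'+1) else useq (kk M i j) (q'+1+1))
          • pirep cs v (es j) := by
    conv_lhs => rw [hwv]
    rw [map_mul, Module.End.mul_apply, habe, map_add, map_smul, map_smul]
  rw [hfinal]
  have hu1 : 0 ≤ useq (kk M i j) (q'+1) := hcoefi _ (by omega)
  have hu2 : 0 ≤ useq (kk M i j) (q'+1+1) := by
    rcases hqm with h0 | hbound
    · rw [kk_of_zero h0, useq_neg_two]; positivity
    · have hm2 : 2 ≤ M i j := by
        have := M.off_diagonal i j hij'
        omega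
      have hcform : kk M i j = -2 * Real.cos (Real.pi / (M i j : ℝ)) := rfl
      rw [hcform]
      exact useq_m_nonneg hm2 (by omega)
  split
  · exact pos_comb hPi hPj hu2 hu1
  · exact pos_comb hPi hPj hu1 hu2

end positivity

section poscor

variable (cs : CoxeterSystem M W)

lemma neg_of_descent {w : W} {i : B} (h : cs.IsRightDescent w i) :
    ∀ b, (pirep cs w (es i)) b ≤ 0 := by
  have hasc : ¬ cs.IsRightDescent (w * cs.simple i) i := by
    rw [cs.isRightDescent_iff]
    rw [cs.isRightDescent_iff] at h
    rw [mul_assoc, cs.simple_mul_simple_self, mul_one]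
    omega
  have hpos := pirep_pos cs (cs.length (w * cs.simple i)) (w * cs.simple i) i rfl hasc
  have heq : pirep cs (w * cs.simple i) (es i) = -(pirep cs w (es i)) := by
    rw [map_mul, Module.End.mul_apply, pirep_simple, sig_es_self, map_neg]
  rw [heq] at hpos
  intro b
  have := hpos b
  simp only [Finsupp.coe_neg, Pi.neg_apply] at this
  linarith

lemma pirep_faithful_one {g : W} (h : pirep cs g = 1) : g = 1 := by
  by_contra hg
  obtain ⟨j, hj⟩ := cs.exists_rightDescent_of_ne_one hg
  have := neg_of_descent cs hj j
  rw [h, Module.End.one_apply] at this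
  rw [es, Finsupp.single_eq_same] at this
  linarith

lemma pirep_conj (u : W) (i : B) (v : B →₀ ℝ) :
    pirep cs (u * cs.simple i * u⁻¹) v
      = v - (BF M (pirep cs u (es i)) v) • (pirep cs u (es i)) := by
  have h1 : pirep cs (u * cs.simple i * u⁻¹) v
      = pirep cs u (sig M i (pirep cs u⁻¹ v)) := by
    rw [map_mul, map_mul, pirep_simple]
    rfl
  rw [h1, sig_apply, map_sub, map_smul, pirep_invol]
  congr 2
  have h2 := BF_pirep cs u (es i) (pirep cs u⁻¹ v)
  rw [pirep_invol] at h2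
  rw [h2, BF_es_left]

lemma eq_simple_of_pirep_es {u : W} {i j : B}
    (h : pirep cs u (es i) = es j ∨ pirep cs u (es i) = -(es j)) :
    u * cs.simple i * u⁻¹ = cs.simple j := by
  have href : ∀ v, pirep cs (u * cs.simple i * u⁻¹) v = sig M j v := by
    intro v
    rw [pirep_conj, sig_apply]
    rcases h with h | h <;> rw [h]
    · rw [BF_es_left]
    · simp only [map_neg, LinearMap.neg_apply, smul_neg, neg_smul, neg_neg, BF_es_left]
  have hone : pirep cs (u * cs.simple i * u⁻¹ * cs.simple j) = 1 := by
    rw [map_mul, pirep_simple]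
    apply LinearMap.ext
    intro v
    simp only [Module.End.mul_apply, Module.End.one_apply]
    rw [href, sig_invol]
  have := pirep_faithful_one cs hone
  calc u * cs.simple i * u⁻¹ = (u * cs.simple i * u⁻¹ * cs.simple j) * cs.simple j := by
        rw [mul_assoc (u * cs.simple i * u⁻¹) (cs.simple j) (cs.simple j),
          cs.simple_mul_simple_self, mul_one]
    _ = cs.simple j := by rw [this, one_mul]

lemma norm_pm {u : W} {i j : B} (h : ∃ lam : ℝ, pirep cs u (es i) = lam • es j) :
    pirep cs u (es i) = es j ∨ pirep cs u (es i) = -(es j) := by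
  obtain ⟨lam, hl⟩ := h
  have h2 : BF M (pirep cs u (es i)) (pirep cs u (es i)) = 2 := by
    rw [BF_pirep, BF_es_left, fLin_es, kk_diag]
  rw [hl] at h2
  simp only [map_smul, LinearMap.smul_apply, smul_eq_mul, BF_es_left, fLin_es, kk_diag] at h2
  have : lam = 1 ∨ lam = -1 := by
    have : (lam - 1) * (lam + 1) = 0 := by nlinarith
    rcases mul_eq_zero.mp this with h | h
    · left; linarith
    · right; linarith
  rcases this with rfl | rfl
  · left; rw [hl, one_smul]
  · right; rw [hl]; module

lemma colinear_of_pos_signeg {Q : B →₀ ℝ} {i : B} (hQ : Pos Q)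
    (hneg : ∀ b, (sig M i Q) b ≤ 0) : Q = Q i • es i := by
  ext b
  rcases eq_or_ne b i with rfl | hbi
  · simp [es, Finsupp.single_eq_same]
  · have h1 := hneg b
    rw [sig_apply, Finsupp.sub_apply, Finsupp.smul_apply, es,
      Finsupp.single_eq_of_ne' (Ne.symm hbi), smul_zero, sub_zero] at h1
    have h2 := hQ b
    have : Q b = 0 := le_antisymm h1 h2
    rw [this]
    simp [es, Finsupp.single_eq_of_ne' (Ne.symm hbi)]

lemma pos_Th {σ : B → B} (hσσ : ∀ b, σ (σ b) = b) {v : B →₀ ℝ} (hv : Pos v) :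
    Pos (Th σ v) := by
  intro b
  have hinj : Function.Injective σ := Function.LeftInverse.injective hσσ
  have : Th σ v b = v (σ b) := by
    conv_lhs => rw [show b = σ (σ b) from (hσσ b).symm]
    exact Finsupp.mapDomain_apply hinj v (σ b)
  rw [this]
  exact hv (σ b)

lemma Th_apply_coord {σ : B → B} (hσσ : ∀ b, σ (σ b) = b) (v : B →₀ ℝ) (b : B) :
    Th σ v b = v (σ b) := by
  have hinj : Function.Injective σ := Function.LeftInverse.injective hσσ
  conv_lhs => rw [show b = σ (σ b) from (hσσ b).symm]
  exact Finsupp.mapDomain_apply hinj v (σ b)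

/-- In "case 1" (`u sᵢ u⁻¹ = s_{σ i}`), the root `π(u) eᵢ` is `± e_{σ i}`,
with sign given by ascent/descent. -/
lemma case1_root {θ : W ≃* W} {σ : B → B}
    (hθ : ∀ w : W, θ (θ w) = w) (hσ : ∀ i : B, θ (cs.simple i) = cs.simple (σ i))
    {u : W} {i : B} (hc1 : u * cs.simple i * u⁻¹ = cs.simple (σ i)) :
    (¬ cs.IsRightDescent u i → pirep cs u (es i) = es (σ i)) ∧
    (cs.IsRightDescent u i → pirep cs u (es i) = -(es (σ i))) := by
  set j := σ i with hj
  have hpm : pirep cs u (es i) = es j ∨ pirep cs u (es i) = -(es j) := by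
    apply norm_pm
    have href : ∀ v, v - (BF M (pirep cs u (es i)) v) • (pirep cs u (es i)) = sig M j v := by
      intro v
      rw [← pirep_conj, hc1, pirep_simple]
    have h1 := href (es j)
    rw [sig_apply, fLin_es, kk_diag] at h1
    have h2 : (BF M (pirep cs u (es i)) (es j)) • (pirep cs u (es i)) = (2:ℝ) • es j :=
      sub_right_injective h1
    have hBne : BF M (pirep cs u (es i)) (es j) ≠ 0 := by
      intro h0
      rw [h0, zero_smul] at h2
      have := congrArg (fun v : B →₀ ℝ => v j) h2
      simp [es, Finsupp.single_eq_same] at this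
    have hfin := congrArg (fun v => (BF M (pirep cs u (es i)) (es j))⁻¹ • v) h2
    simp only [smul_smul, inv_mul_cancel₀ hBne, one_smul] at hfin
    exact ⟨_, hfin⟩
  constructor
  · intro hasc
    rcases hpm with h | h
    · exact h
    · exfalso
      have hpos := pirep_pos cs (cs.length u) u i rfl hasc j
      rw [h] at hpos
      simp only [Finsupp.coe_neg, Pi.neg_apply] at hpos
      rw [es, Finsupp.single_eq_same] at hpos
      linarith
  · intro hdesc
    rcases hpm with h | h
    · exfalso
      have hneg := neg_of_descent cs hdesc j
      rw [h, es, Finsupp.single_eq_same] at hneg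
      linarith
    · exact h

end poscor

section twisted

variable (cs : CoxeterSystem M W) (θ : W ≃* W) (σ : B → B)

lemma left_desc_iff (y : W) (b : B) :
    cs.length (cs.simple b * y) < cs.length y ↔ cs.IsRightDescent y⁻¹ b := by
  show _ ↔ cs.length (y⁻¹ * cs.simple b) < cs.length y⁻¹
  rw [← cs.length_inv (y⁻¹ * cs.simple b), mul_inv_rev, cs.inv_simple, inv_inv, cs.length_inv y]

lemma cond_iff_conj (hσ : ∀ i : B, θ (cs.simple i) = cs.simple (σ i)) (w : W) (i : B) :
    (θ (cs.simple i) * w * cs.simple i = w) ↔ w * cs.simple i * w⁻¹ = cs.simple (σ i) := by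
  rw [hσ]
  constructor
  · intro h
    have h2 := congrArg (fun x => x * cs.simple i) h
    rw [mul_assoc (cs.simple (σ i) * w), cs.simple_mul_simple_self, mul_one] at h2
    rw [← h2]
    group
  · intro h
    rw [← h]
    rw [show w * cs.simple i * w⁻¹ * w * cs.simple i = w * (cs.simple i * cs.simple i) by group]
    rw [cs.simple_mul_simple_self, mul_one]

lemma theta_simple_sq (hσ : ∀ i : B, θ (cs.simple i) = cs.simple (σ i)) (i : B) :
    θ (cs.simple i) * θ (cs.simple i) = 1 := by
  rw [hσ, cs.simple_mul_simple_self]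

lemma twMul_mem (hθ : ∀ w : W, θ (θ w) = w)
    (hσ : ∀ i : B, θ (cs.simple i) = cs.simple (σ i))
    {w : W} (hw : θ w = w⁻¹) (i : B) : θ (twMul cs θ w i) = (twMul cs θ w i)⁻¹ := by
  rw [twMul]
  split_ifs with h
  · have h2 := congrArg (fun x => x * cs.simple i) h
    rw [mul_assoc (θ (cs.simple i) * w), cs.simple_mul_simple_self, mul_one] at h2
    rw [hσ] at h2
    -- h2 : s (σ i) * w = w * s i
    rw [map_mul, hw, hσ, mul_inv_rev, cs.inv_simple]
    calc w⁻¹ * cs.simple (σ i) = w⁻¹ * (cs.simple (σ i) * w) * w⁻¹ := by group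
      _ = w⁻¹ * (w * cs.simple i) * w⁻¹ := by rw [h2]
      _ = cs.simple i * w⁻¹ := by group
  · have hL : θ (θ (cs.simple i) * w * cs.simple i)
        = cs.simple i * w⁻¹ * cs.simple (σ i) := by
      rw [map_mul, map_mul, hθ, hw, hσ]
    have hR : (θ (cs.simple i) * w * cs.simple i)⁻¹
        = cs.simple i * w⁻¹ * cs.simple (σ i) := by
      rw [hσ, mul_inv_rev, mul_inv_rev, cs.inv_simple, cs.inv_simple, mul_assoc]
    rw [hL, hR]

lemma twMul_twMul (hθ : ∀ w : W, θ (θ w) = w)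
    (hσ : ∀ i : B, θ (cs.simple i) = cs.simple (σ i))
    (w : W) (i : B) : twMul cs θ (twMul cs θ w i) i = w := by
  have hsq := theta_simple_sq cs θ σ hσ i
  have h5 : ∀ u : W, θ (cs.simple i) * (θ (cs.simple i) * u * cs.simple i) * cs.simple i = u := by
    intro u
    rw [show θ (cs.simple i) * (θ (cs.simple i) * u * cs.simple i) * cs.simple i
      = (θ (cs.simple i) * θ (cs.simple i)) * u * (cs.simple i * cs.simple i) by group]
    rw [hsq, cs.simple_mul_simple_self, one_mul, mul_one]
  rw [twMul, twMul]
  split_ifs with h h2 h3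
  · rw [mul_assoc, cs.simple_mul_simple_self, mul_one]
  · exfalso
    apply h2
    have h4 := congrArg (fun x => x * cs.simple i) h
    rw [mul_assoc (θ (cs.simple i) * w), cs.simple_mul_simple_self, mul_one] at h4
    -- h4 : θ(s i) * w = w * s i
    calc θ (cs.simple i) * (w * cs.simple i) * cs.simple i
        = θ (cs.simple i) * w * (cs.simple i * cs.simple i) := by group
      _ = θ (cs.simple i) * w := by rw [cs.simple_mul_simple_self, mul_one]
      _ = w * cs.simple i := h4
  · exact absurd (h3.symm.trans (h5 w)) h
  · exact h5 w

lemma len_mirror (hθ : ∀ w : W, θ (θ w) = w)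
    (hσ : ∀ i : B, θ (cs.simple i) = cs.simple (σ i))
    {w : W} (hw : θ w = w⁻¹) (i : B) :
    cs.length (cs.simple (σ i) * w) = cs.length (w * cs.simple i) := by
  have h1 : θ (w * cs.simple i) = w⁻¹ * cs.simple (σ i) := by
    rw [map_mul, hw, hσ]
  calc cs.length (cs.simple (σ i) * w)
      = cs.length ((cs.simple (σ i) * w)⁻¹) := (cs.length_inv _).symm
    _ = cs.length (w⁻¹ * cs.simple (σ i)) := by
        rw [mul_inv_rev, cs.inv_simple]
    _ = cs.length (θ (w * cs.simple i)) := by rw [h1]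
    _ = cs.length (w * cs.simple i) := length_theta cs θ σ hθ hσ _

/-- Case 2, ascending: the twisted conjugate jumps by exactly 2. -/
lemma case2_up (hθ : ∀ w : W, θ (θ w) = w)
    (hσ : ∀ i : B, θ (cs.simple i) = cs.simple (σ i))
    {w : W} (hw : θ w = w⁻¹) {i : B}
    (hnc : ¬ (θ (cs.simple i) * w * cs.simple i = w))
    (hasc : ¬ cs.IsRightDescent w i) :
    cs.length (θ (cs.simple i) * w * cs.simple i) = cs.length w + 2 := by
  have hσσ : ∀ b, σ (σ b) = b := sigma_sigma cs θ σ hθ hσ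
  have hconj : ¬ (w * cs.simple i * w⁻¹ = cs.simple (σ i)) := by
    rw [← cond_iff_conj cs θ σ hσ]
    exact hnc
  have h1 : cs.length (w * cs.simple i) = cs.length w + 1 :=
    cs.not_isRightDescent_iff.mp hasc
  set y := w * cs.simple i with hy
  have hstep : ¬ (cs.length (cs.simple (σ i) * y) < cs.length y) := by
    intro hdesc
    rw [left_desc_iff] at hdesc
    have hneg := neg_of_descent cs hdesc
    have hP : Pos (pirep cs w (es i)) := pirep_pos cs (cs.length w) w i rfl hasc
    have hyinv : y⁻¹ = cs.simple i * θ w := by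
      rw [hy, mul_inv_rev, cs.inv_simple, hw]
    have hcomp : pirep cs y⁻¹ (es (σ i))
        = sig M i (Th σ (pirep cs w (es i))) := by
      rw [hyinv, map_mul, pirep_simple, Module.End.mul_apply,
        pirep_theta cs θ σ hθ hσ]
      simp only [Module.End.mul_apply]
      rw [Th_es, hσσ]
    rw [hcomp] at hneg
    have hQpos : Pos (Th σ (pirep cs w (es i))) := pos_Th hσσ hP
    have hcol := colinear_of_pos_signeg hQpos hneg
    have hPcol : pirep cs w (es i)
        = (Th σ (pirep cs w (es i)) i) • es (σ i) := by
      have hTT : Th σ (Th σ (pirep cs w (es i))) = pirep cs w (es i) := by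
        have := DFunLike.congr_fun (Th_Th cs θ σ hθ hσ) (pirep cs w (es i))
        simpa [Module.End.mul_apply] using this
      calc pirep cs w (es i) = Th σ (Th σ (pirep cs w (es i))) := hTT.symm
        _ = Th σ ((Th σ (pirep cs w (es i)) i) • es i) := by rw [← hcol]
        _ = (Th σ (pirep cs w (es i)) i) • es (σ i) := by rw [map_smul, Th_es]
    have := eq_simple_of_pirep_es cs (norm_pm cs ⟨_, hPcol⟩)
    exact hconj this
  have h2 := cs.length_simple_mul y (σ i)
  have h3 : cs.length (cs.simple (σ i) * y) = cs.length y + 1 := by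
    rcases h2 with h | h
    · exact h
    · omega
  rw [← mul_assoc] at h3
  rw [hσ]
  omega

/-- Case 2, descending: drops by exactly 2. -/
lemma case2_down (hθ : ∀ w : W, θ (θ w) = w)
    (hσ : ∀ i : B, θ (cs.simple i) = cs.simple (σ i))
    {w : W} (hw : θ w = w⁻¹) {i : B}
    (hnc : ¬ (θ (cs.simple i) * w * cs.simple i = w))
    (hdesc : cs.IsRightDescent w i) :
    cs.length (θ (cs.simple i) * w * cs.simple i) + 2 = cs.length w := by
  have hσσ : ∀ b, σ (σ b) = b := sigma_sigma cs θ σ hθ hσ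
  have hconj : ¬ (w * cs.simple i * w⁻¹ = cs.simple (σ i)) := by
    rw [← cond_iff_conj cs θ σ hσ]
    exact hnc
  have h1 : cs.length (w * cs.simple i) + 1 = cs.length w :=
    cs.isRightDescent_iff.mp hdesc
  set y := w * cs.simple i with hy
  have hstep : cs.length (cs.simple (σ i) * y) < cs.length y := by
    by_contra hnd
    have hnd' : ¬ cs.IsRightDescent y⁻¹ (σ i) := by
      rw [← left_desc_iff]
      exact hnd
    have hpos := pirep_pos cs (cs.length y⁻¹) y⁻¹ (σ i) rfl hnd'
    have hPneg := neg_of_descent cs hdesc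
    have hyinv : y⁻¹ = cs.simple i * θ w := by
      rw [hy, mul_inv_rev, cs.inv_simple, hw]
    have hcomp : pirep cs y⁻¹ (es (σ i))
        = sig M i (Th σ (pirep cs w (es i))) := by
      rw [hyinv, map_mul, pirep_simple, Module.End.mul_apply,
        pirep_theta cs θ σ hθ hσ]
      simp only [Module.End.mul_apply]
      rw [Th_es, hσσ]
    rw [hcomp] at hpos
    -- let P' = -P ≥ 0
    have hQpos : Pos (Th σ (-(pirep cs w (es i)))) := by
      apply pos_Th hσσ
      intro b
      simp only [Finsupp.coe_neg, Pi.neg_apply]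
      linarith [hPneg b]
    have hneg2 : ∀ b, (sig M i (Th σ (-(pirep cs w (es i))))) b ≤ 0 := by
      intro b
      have := hpos b
      have hrw : sig M i (Th σ (-(pirep cs w (es i)))) = -(sig M i (Th σ (pirep cs w (es i)))) := by
        rw [map_neg, map_neg]
      rw [hrw]
      simp only [Finsupp.coe_neg, Pi.neg_apply]
      linarith
    have hcol := colinear_of_pos_signeg hQpos hneg2
    have hPcol : ∃ lam : ℝ, pirep cs w (es i) = lam • es (σ i) := by
      have hTT : Th σ (Th σ (-(pirep cs w (es i)))) = -(pirep cs w (es i)) := by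
        have := DFunLike.congr_fun (Th_Th cs θ σ hθ hσ) (-(pirep cs w (es i)))
        simpa [Module.End.mul_apply] using this
      have hthis : -(pirep cs w (es i)) = (Th σ (-(pirep cs w (es i))) i) • es (σ i) := by
        calc -(pirep cs w (es i)) = Th σ (Th σ (-(pirep cs w (es i)))) := hTT.symm
          _ = Th σ ((Th σ (-(pirep cs w (es i))) i) • es i) := by rw [← hcol]
          _ = (Th σ (-(pirep cs w (es i))) i) • es (σ i) := by rw [map_smul, Th_es]
      refine ⟨-(Th σ (-(pirep cs w (es i))) i), ?_⟩
      rw [neg_smul, ← hthis, neg_neg]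
    have := eq_simple_of_pirep_es cs (norm_pm cs hPcol)
    exact hconj this
  have h3 : cs.length (cs.simple (σ i) * y) + 1 = cs.length y := by
    rcases cs.length_simple_mul y (σ i) with h | h
    · omega
    · omega
  rw [← mul_assoc] at h3
  rw [hσ]
  omega

end twisted

section invariant

variable (cs : CoxeterSystem M W) (θ : W ≃* W) (σ : B → B)

/-- The involution `π(u) ∘ Θ̂`. -/
def Aop (u : W) : Module.End ℝ (B →₀ ℝ) := pirep cs u * Th σ

/-- negative eigenspace -/
def Mneg (u : W) : Submodule ℝ (B →₀ ℝ) := LinearMap.ker (Aop cs σ u + LinearMap.id)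

lemma mem_Mneg {u : W} {v : B →₀ ℝ} :
    v ∈ Mneg cs σ u ↔ Aop cs σ u v = -v := by
  rw [Mneg, LinearMap.mem_ker, LinearMap.add_apply, LinearMap.id_apply, add_eq_zero_iff_eq_neg]

variable (F : Finset B)

def VF : Submodule ℝ (B →₀ ℝ) := Finsupp.supported ℝ ℝ (↑F : Set B)

def XF (u : W) : Submodule ℝ (B →₀ ℝ) := Mneg cs σ u ⊓ VF F

lemma fd_VF : FiniteDimensional ℝ (VF F) := by
  rw [VF, Finsupp.supported_eq_span_single]
  exact FiniteDimensional.span_of_finite ℝ (Set.Finite.image _ F.finite_toSet)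

lemma fd_XF (u : W) : FiniteDimensional ℝ (XF cs σ F u) := by
  haveI := fd_VF (F := F)
  have hle : XF cs σ F u ≤ VF F := inf_le_right
  exact FiniteDimensional.of_injective (V₂ := VF F) (Submodule.inclusion hle)
    (Submodule.inclusion_injective hle)

/-- The dimension invariant. -/
noncomputable def DD (u : W) : ℕ := Module.finrank ℝ (XF cs σ F u)

lemma es_mem_VF {b : B} (hb : b ∈ F) : es b ∈ VF F :=
  Finsupp.single_mem_supported ℝ 1 hb

lemma sig_mem_VF {b : B} (hb : b ∈ F) {v : B →₀ ℝ} (hv : v ∈ VF F) :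
    sig M b v ∈ VF F := by
  rw [sig_apply]
  exact Submodule.sub_mem _ hv (Submodule.smul_mem _ _ (es_mem_VF F hb))

lemma BF_Aop (hθ : ∀ w : W, θ (θ w) = w)
    (hσ : ∀ i : B, θ (cs.simple i) = cs.simple (σ i)) (u : W) (v v' : B →₀ ℝ) :
    BF M (Aop cs σ u v) (Aop cs σ u v') = BF M v v' := by
  rw [Aop]
  simp only [Module.End.mul_apply]
  rw [BF_pirep, BF_Th cs θ σ hθ hσ]

lemma cond_swap {u : W} {i : B} (h : θ (cs.simple i) * u * cs.simple i = u) :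
    θ (cs.simple i) * u = u * cs.simple i := by
  have h2 := congrArg (fun x => x * cs.simple i) h
  rw [mul_assoc (θ (cs.simple i) * u), cs.simple_mul_simple_self, mul_one] at h2
  exact h2

lemma Aop_case1 (hσ : ∀ i : B, θ (cs.simple i) = cs.simple (σ i)) {u : W} {i : B}
    (h : θ (cs.simple i) * u * cs.simple i = u) :
    Aop cs σ (u * cs.simple i) = sig M (σ i) * Aop cs σ u := by
  have h2 := cond_swap cs θ h
  rw [hσ] at h2
  rw [Aop, ← h2, map_mul, pirep_simple, Aop, mul_assoc]

lemma Aop_es (hθ : ∀ w : W, θ (θ w) = w)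
    (hσ : ∀ i : B, θ (cs.simple i) = cs.simple (σ i)) (u : W) (i : B) :
    Aop cs σ u (es (σ i)) = pirep cs u (es i) := by
  rw [Aop]
  simp only [Module.End.mul_apply]
  rw [Th_es, sigma_sigma cs θ σ hθ hσ]

lemma Mneg_case1 (hθ : ∀ w : W, θ (θ w) = w)
    (hσ : ∀ i : B, θ (cs.simple i) = cs.simple (σ i)) {u : W} {i : B}
    (hc1 : θ (cs.simple i) * u * cs.simple i = u)
    (hroot : pirep cs u (es i) = es (σ i)) :
    Mneg cs σ (u * cs.simple i) = Mneg cs σ u ⊔ Submodule.span ℝ {es (σ i)} := by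
  have hA' := Aop_case1 cs θ σ hσ hc1
  have hAe : Aop cs σ u (es (σ i)) = es (σ i) := by
    rw [Aop_es cs θ σ hθ hσ, hroot]
  apply _root_.le_antisymm
  · intro v hv
    rw [mem_Mneg, hA'] at hv
    simp only [Module.End.mul_apply] at hv
    have hAv : Aop cs σ u v = -v + (fLin M (σ i) v) • es (σ i) := by
      have h2 := congrArg (sig M (σ i)) hv
      rw [sig_invol] at h2
      rw [h2, sig_apply, map_neg, neg_smul, sub_neg_eq_add]
    refine Submodule.mem_sup.mpr ⟨v - (fLin M (σ i) v / 2) • es (σ i), ?_,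
      (fLin M (σ i) v / 2) • es (σ i),
      Submodule.smul_mem _ _ (Submodule.mem_span_singleton_self _), by abel⟩
    rw [mem_Mneg, map_sub, map_smul, hAv, hAe]
    module
  · apply sup_le
    · intro v hv
      rw [mem_Mneg] at hv
      rw [mem_Mneg, hA']
      simp only [Module.End.mul_apply]
      have horth : BF M (es (σ i)) v = 0 := by
        have hh := BF_Aop cs θ σ hθ hσ u (es (σ i)) v
        rw [hAe, hv] at hh
        simp only [map_neg] at hh
        linarith
      have hsig : sig M (σ i) v = v := by
        rw [sig_apply, show fLin M (σ i) v = BF M (es (σ i)) v from (BF_es_left _ _).symm,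
          horth, zero_smul, sub_zero]
      rw [hv, map_neg, hsig]
    · rw [Submodule.span_le]
      intro x hx
      rw [Set.mem_singleton_iff] at hx
      subst hx
      rw [SetLike.mem_coe, mem_Mneg, hA']
      simp only [Module.End.mul_apply]
      rw [hAe, sig_es_self]

lemma XF_case1 (hθ : ∀ w : W, θ (θ w) = w)
    (hσ : ∀ i : B, θ (cs.simple i) = cs.simple (σ i)) {u : W} {i : B}
    (hc1 : θ (cs.simple i) * u * cs.simple i = u)
    (hroot : pirep cs u (es i) = es (σ i)) (hjF : σ i ∈ F) :
    XF cs σ F (u * cs.simple i) = XF cs σ F u ⊔ Submodule.span ℝ {es (σ i)} := by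
  rw [XF, Mneg_case1 cs θ σ hθ hσ hc1 hroot, XF]
  apply _root_.le_antisymm
  · rintro v ⟨hv1, hv2⟩
    obtain ⟨x, hx, y, hy, rfl⟩ := Submodule.mem_sup.mp hv1
    obtain ⟨c, rfl⟩ := Submodule.mem_span_singleton.mp hy
    have hxV : x ∈ VF F := by
      have h3 : x = (x + c • es (σ i)) - c • es (σ i) := by abel
      rw [h3]
      exact Submodule.sub_mem _ hv2 (Submodule.smul_mem _ _ (es_mem_VF F hjF))
    exact Submodule.mem_sup.mpr ⟨x, ⟨hx, hxV⟩, c • es (σ i),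
      Submodule.smul_mem _ _ (Submodule.mem_span_singleton_self _), rfl⟩
  · apply sup_le
    · exact inf_le_inf le_sup_left le_rfl
    · apply le_inf le_sup_right
      rw [Submodule.span_le]
      intro x hx
      rw [Set.mem_singleton_iff] at hx
      subst hx
      exact es_mem_VF F hjF

lemma DD_case1_up (hθ : ∀ w : W, θ (θ w) = w)
    (hσ : ∀ i : B, θ (cs.simple i) = cs.simple (σ i)) {u : W} {i : B}
    (hc1 : θ (cs.simple i) * u * cs.simple i = u)
    (hasc : ¬ cs.IsRightDescent u i) (hjF : σ i ∈ F) :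
    DD cs σ F (u * cs.simple i) = DD cs σ F u + 1 := by
  have hconj : u * cs.simple i * u⁻¹ = cs.simple (σ i) := (cond_iff_conj cs θ σ hσ u i).mp hc1
  have hroot := (case1_root cs hθ hσ hconj).1 hasc
  have hXF := XF_case1 cs θ σ F hθ hσ hc1 hroot hjF
  haveI := fd_XF cs σ F u
  haveI : FiniteDimensional ℝ (Submodule.span ℝ {es (σ i)}) :=
    FiniteDimensional.span_of_finite ℝ (Set.finite_singleton _)
  have hdisj : XF cs σ F u ⊓ Submodule.span ℝ {es (σ i)} = ⊥ := by
    rw [eq_bot_iff]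
    rintro x ⟨hx1, hx2⟩
    obtain ⟨c, rfl⟩ := Submodule.mem_span_singleton.mp hx2
    have hx1' : c • es (σ i) ∈ Mneg cs σ u := hx1.1
    rw [mem_Mneg, map_smul, Aop_es cs θ σ hθ hσ, hroot] at hx1'
    have hco := congrArg (fun v : B →₀ ℝ => v (σ i)) hx1'
    simp only [Finsupp.smul_apply, Finsupp.coe_neg, Pi.neg_apply, smul_eq_mul] at hco
    rw [es, Finsupp.single_eq_same] at hco
    have hc : c = 0 := by
      simp only [mul_one] at hco
      linarith
    rw [hc, zero_smul]
    exact Submodule.zero_mem _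
  have hrk := Submodule.finrank_sup_add_finrank_inf_eq (XF cs σ F u)
    (Submodule.span ℝ {es (σ i)})
  rw [hdisj, finrank_span_singleton (es_ne_zero (σ i)), finrank_bot] at hrk
  rw [DD, DD, hXF]
  omega

lemma DD_case1_down (hθ : ∀ w : W, θ (θ w) = w)
    (hσ : ∀ i : B, θ (cs.simple i) = cs.simple (σ i)) {u : W} {i : B}
    (hc1 : θ (cs.simple i) * u * cs.simple i = u)
    (hdesc : cs.IsRightDescent u i) (hjF : σ i ∈ F) :
    DD cs σ F (u * cs.simple i) + 1 = DD cs σ F u := by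
  have hswap := cond_swap cs θ hc1
  have hc1' : θ (cs.simple i) * (u * cs.simple i) * cs.simple i = u * cs.simple i := by
    calc θ (cs.simple i) * (u * cs.simple i) * cs.simple i
        = (θ (cs.simple i) * u) * (cs.simple i * cs.simple i) := by group
      _ = θ (cs.simple i) * u := by rw [cs.simple_mul_simple_self, mul_one]
      _ = u * cs.simple i := hswap
  have hasc' : ¬ cs.IsRightDescent (u * cs.simple i) i := by
    rw [cs.not_isRightDescent_iff]
    rw [mul_assoc, cs.simple_mul_simple_self, mul_one]
    exact (cs.isRightDescent_iff.mp hdesc).symm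
  have := DD_case1_up cs θ σ F hθ hσ hc1' hasc' hjF
  rw [mul_assoc, cs.simple_mul_simple_self, mul_one] at this
  omega

lemma Aop_case2 (hθ : ∀ w : W, θ (θ w) = w)
    (hσ : ∀ i : B, θ (cs.simple i) = cs.simple (σ i)) (u : W) (i : B) :
    Aop cs σ (cs.simple (σ i) * u * cs.simple i)
      = sig M (σ i) * Aop cs σ u * sig M (σ i) := by
  rw [Aop, map_mul, map_mul, pirep_simple, pirep_simple]
  have h1 : sig M i * Th σ = Th σ * sig M (σ i) := by
    have h2 := Th_sig cs θ σ hθ hσ i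
    calc sig M i * Th σ = (Th σ * Th σ) * sig M i * Th σ := by
          rw [Th_Th cs θ σ hθ hσ, one_mul]
      _ = Th σ * (Th σ * sig M i * Th σ) := by simp only [mul_assoc]
      _ = Th σ * sig M (σ i) := by rw [h2]
  rw [Aop]
  simp only [mul_assoc]
  rw [h1]

lemma Mneg_case2 (hθ : ∀ w : W, θ (θ w) = w)
    (hσ : ∀ i : B, θ (cs.simple i) = cs.simple (σ i)) (u : W) (i : B) :
    Mneg cs σ (cs.simple (σ i) * u * cs.simple i)
      = Submodule.map (sig M (σ i)) (Mneg cs σ u) := by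
  ext v
  rw [mem_Mneg, Aop_case2 cs θ σ hθ hσ]
  simp only [Module.End.mul_apply]
  constructor
  · intro hv
    have h2 := congrArg (sig M (σ i)) hv
    rw [sig_invol, map_neg] at h2
    exact Submodule.mem_map.mpr ⟨sig M (σ i) v, (mem_Mneg cs σ).mpr h2, sig_invol _ _⟩
  · rintro ⟨x, hx, rfl⟩
    have hx' := (mem_Mneg cs σ).mp hx
    rw [sig_invol, hx', map_neg]

lemma XF_case2 (hθ : ∀ w : W, θ (θ w) = w)
    (hσ : ∀ i : B, θ (cs.simple i) = cs.simple (σ i)) (u : W) (i : B) (hjF : σ i ∈ F) :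
    XF cs σ F (cs.simple (σ i) * u * cs.simple i)
      = Submodule.map (sig M (σ i)) (XF cs σ F u) := by
  rw [XF, Mneg_case2 cs θ σ hθ hσ, XF]
  ext v
  constructor
  · rintro ⟨⟨x, hx, rfl⟩, hv2⟩
    refine ⟨x, ⟨hx, ?_⟩, rfl⟩
    have := sig_mem_VF (M := M) F hjF hv2
    rwa [sig_invol] at this
  · rintro ⟨x, ⟨hx1, hx2⟩, rfl⟩
    exact ⟨⟨x, hx1, rfl⟩, sig_mem_VF (M := M) F hjF hx2⟩

lemma DD_case2 (hθ : ∀ w : W, θ (θ w) = w)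
    (hσ : ∀ i : B, θ (cs.simple i) = cs.simple (σ i)) (u : W) (i : B) (hjF : σ i ∈ F) :
    DD cs σ F (cs.simple (σ i) * u * cs.simple i) = DD cs σ F u := by
  rw [DD, DD, XF_case2 cs θ σ F hθ hσ u i hjF]
  let eqv : (B →₀ ℝ) ≃ₗ[ℝ] (B →₀ ℝ) :=
    LinearEquiv.ofInvolutive (sig M (σ i)) (sig_invol (σ i))
  exact LinearEquiv.finrank_map_eq eqv (XF cs σ F u)

end invariant

section final

variable (cs : CoxeterSystem M W) (θ : W ≃* W) (σ : B → B)

lemma twWord_append (w : W) (ω : List B) (a : B) :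
    twWord cs θ w (ω ++ [a]) = twMul cs θ (twWord cs θ w ω) a := by
  rw [twWord, List.foldl_append]
  rfl

lemma twWord_mem (hθ : ∀ w : W, θ (θ w) = w)
    (hσ : ∀ i : B, θ (cs.simple i) = cs.simple (σ i)) :
    ∀ (ω : List B) (w : W), θ w = w⁻¹ → θ (twWord cs θ w ω) = (twWord cs θ w ω)⁻¹ := by
  intro ω
  induction ω with
  | nil => intro w hw; exact hw
  | cons a ω ih =>
    intro w hw
    rw [twWord, List.foldl_cons]
    exact ih (twMul cs θ w a) (twMul_mem cs θ σ hθ hσ hw a)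

lemma step_main (F : Finset B) (hθ : ∀ w : W, θ (θ w) = w)
    (hσ : ∀ i : B, θ (cs.simple i) = cs.simple (σ i))
    {u : W} {i : B} (hu : θ u = u⁻¹) (hjF : σ i ∈ F) :
    ((cs.length (twMul cs θ u i) : ℤ) + DD cs σ F (twMul cs θ u i)
      = (cs.length u : ℤ) + DD cs σ F u + 2)
    ∨ ((cs.length (twMul cs θ u i) : ℤ) + DD cs σ F (twMul cs θ u i) + 2
      = (cs.length u : ℤ) + DD cs σ F u) := by
  rw [twMul]
  split_ifs with h
  · by_cases hd : cs.IsRightDescent u i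
    · right
      have h1 := cs.isRightDescent_iff.mp hd
      have h2 := DD_case1_down cs θ σ F hθ hσ h hd hjF
      push_cast
      omega
    · left
      have h1 := cs.not_isRightDescent_iff.mp hd
      have h2 := DD_case1_up cs θ σ F hθ hσ h hd hjF
      push_cast
      omega
  · have h2 : DD cs σ F (θ (cs.simple i) * u * cs.simple i) = DD cs σ F u := by
      rw [hσ]
      exact DD_case2 cs θ σ F hθ hσ u i hjF
    by_cases hd : cs.IsRightDescent u i
    · right
      have h1 := case2_down cs θ σ hθ hσ hu h hd
      push_cast
      omega
    · left
      have h1 := case2_up cs θ σ hθ hσ hu h hd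
      push_cast
      omega

lemma word_parity (F : Finset B) (hθ : ∀ w : W, θ (θ w) = w)
    (hσ : ∀ i : B, θ (cs.simple i) = cs.simple (σ i))
    (hFst : ∀ b ∈ F, σ b ∈ F) :
    ∀ ω : List B, (∀ b ∈ ω, b ∈ F) → ∃ z : ℤ,
      ((cs.length (twWord cs θ 1 ω) : ℤ) + DD cs σ F (twWord cs θ 1 ω) - DD cs σ F 1 = 2 * z)
      ∧ ∃ t : ℤ, z - ω.length = 2 * t := by
  intro ω
  induction ω using List.reverseRecOn with
  | nil =>
    intro _
    refine ⟨0, ?_, 0, by simp⟩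
    have h1 : twWord cs θ 1 ([] : List B) = 1 := rfl
    rw [h1, cs.length_one]
    push_cast
    ring
  | append_singleton ω a ih =>
    intro hmem
    have hmem' : ∀ b ∈ ω, b ∈ F := fun b hb => hmem b (by simp [hb])
    have haF : a ∈ F := hmem a (by simp)
    obtain ⟨z, hz1, t, ht⟩ := ih hmem'
    have hu : θ (twWord cs θ 1 ω) = (twWord cs θ 1 ω)⁻¹ :=
      twWord_mem cs θ σ hθ hσ ω 1 (by rw [map_one, inv_one])
    rw [twWord_append]
    rcases step_main cs θ σ F hθ hσ hu (hFst a haF) with h | h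
    · refine ⟨z + 1, by omega, t, ?_⟩
      simp only [List.length_append, List.length_singleton]
      push_cast
      omega
    · refine ⟨z - 1, by omega, t - 1, ?_⟩
      simp only [List.length_append, List.length_singleton]
      push_cast
      omega

lemma exists_expr (hθ : ∀ w : W, θ (θ w) = w)
    (hσ : ∀ i : B, θ (cs.simple i) = cs.simple (σ i)) :
    ∀ n (u : W), cs.length u = n → θ u = u⁻¹ →
    ∃ ω : List B, twWord cs θ 1 ω = u := by
  intro n
  induction n using Nat.strong_induction_on with
  | _ n IH =>
  intro u hn hu
  rcases eq_or_ne u 1 with rfl | hne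
  · exact ⟨[], rfl⟩
  obtain ⟨i, hi⟩ := cs.exists_rightDescent_of_ne_one hne
  have hlen : cs.length (twMul cs θ u i) < cs.length u := by
    rw [twMul]
    split_ifs with h
    · have := cs.isRightDescent_iff.mp hi
      omega
    · have := case2_down cs θ σ hθ hσ hu h hi
      omega
  have hmem := twMul_mem cs θ σ hθ hσ hu i
  obtain ⟨ω, hω⟩ := IH (cs.length (twMul cs θ u i)) (by omega) _ rfl hmem
  refine ⟨ω ++ [i], ?_⟩
  rw [twWord_append, hω, twMul_twMul cs θ σ hθ hσ]

end final

end TwAux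
end TwAux

/-- the rank of `w·ŝ` is `ρ(w) + 1` or `ρ(w) - 1`. -/
theorem twRank_twMul (cs : CoxeterSystem M W) (θ : W ≃* W)
    (hθ : ∀ w : W, θ (θ w) = w) (σ : B → B)
    (hσ : ∀ i : B, θ (cs.simple i) = cs.simple (σ i))
    {w : W} (hw : w ∈ TwistedInvolutions θ) (i : B) :
    twRank cs θ (twMul cs θ w i) = twRank cs θ w + 1 ∨
      twRank cs θ (twMul cs θ w i) + 1 = twRank cs θ w := by
  have hw' : θ w = w⁻¹ := hw
  have hxI : θ (twMul cs θ w i) = (twMul cs θ w i)⁻¹ := TwAux.twMul_mem cs θ σ hθ hσ hw' i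
  have hSw : {n | ∃ ω : List B, ω.length = n ∧ twWord cs θ 1 ω = w}.Nonempty := by
    obtain ⟨ω, hω⟩ := TwAux.exists_expr cs θ σ hθ hσ (cs.length w) w rfl hw'
    exact ⟨ω.length, ω, rfl, hω⟩
  have hSx : {n | ∃ ω : List B, ω.length = n ∧ twWord cs θ 1 ω = twMul cs θ w i}.Nonempty := by
    obtain ⟨ω, hω⟩ := TwAux.exists_expr cs θ σ hθ hσ (cs.length (twMul cs θ w i)) _ rfl hxI
    exact ⟨ω.length, ω, rfl, hω⟩
  have hmw : ∃ ω : List B, ω.length = twRank cs θ w ∧ twWord cs θ 1 ω = w :=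
    Nat.sInf_mem hSw
  obtain ⟨ωw, hwlen, hww⟩ := hmw
  have hmx : ∃ ω : List B, ω.length = twRank cs θ (twMul cs θ w i) ∧
      twWord cs θ 1 ω = twMul cs θ w i := Nat.sInf_mem hSx
  obtain ⟨ωx, hxlen, hxx⟩ := hmx
  have hb1 : twRank cs θ (twMul cs θ w i) ≤ twRank cs θ w + 1 := by
    apply Nat.sInf_le
    refine ⟨ωw ++ [i], ?_, ?_⟩
    · simp [hwlen]
    · rw [TwAux.twWord_append, hww]
  have hb2 : twRank cs θ w ≤ twRank cs θ (twMul cs θ w i) + 1 := by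
    apply Nat.sInf_le
    refine ⟨ωx ++ [i], ?_, ?_⟩
    · simp [hxlen]
    · rw [TwAux.twWord_append, hxx, TwAux.twMul_twMul cs θ σ hθ hσ]
  set F0 : Finset B := (i :: (ωw ++ ωx)).toFinset with hF0
  set F : Finset B := F0 ∪ F0.image σ with hF
  have hFst : ∀ b ∈ F, σ b ∈ F := by
    intro b hb
    rcases Finset.mem_union.mp hb with h | h
    · exact Finset.mem_union.mpr (Or.inr (Finset.mem_image_of_mem σ h))
    · obtain ⟨a, ha, rfl⟩ := Finset.mem_image.mp h
      refine Finset.mem_union.mpr (Or.inl ?_)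
      rwa [TwAux.sigma_sigma cs θ σ hθ hσ]
  have hsub1 : ∀ b ∈ ωw ++ [i], b ∈ F := by
    intro b hb
    apply Finset.mem_union.mpr
    left
    rw [hF0, List.mem_toFinset]
    simp only [List.mem_append, List.mem_singleton] at hb
    simp only [List.mem_cons, List.mem_append]
    tauto
  have hsub2 : ∀ b ∈ ωx, b ∈ F := by
    intro b hb
    apply Finset.mem_union.mpr
    left
    rw [hF0, List.mem_toFinset]
    simp only [List.mem_cons, List.mem_append]
    tauto
  obtain ⟨z1, hz1, t1, ht1⟩ := TwAux.word_parity cs θ σ F hθ hσ hFst (ωw ++ [i]) hsub1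
  obtain ⟨z2, hz2, t2, ht2⟩ := TwAux.word_parity cs θ σ F hθ hσ hFst ωx hsub2
  rw [TwAux.twWord_append, hww] at hz1
  rw [hxx] at hz2
  have hll : (ωw ++ [i]).length = ωw.length + 1 := by simp
  rw [hll] at ht1
  have hz12 : z1 = z2 := by omega
  have hneq : ωx.length ≠ ωw.length := by omega
  omega
end

section
/- Let w ∈ 𝕀(θ) and suppose every right descent s of w 'passes through' w, meaning ws = s̃w for some s̃ ∈ S. Then w is the longest element of the finite parabolic subgroup generated by S(w), the set of generators appearing in some (equivalently, any) reduced word for w. Moreover w's right descent set equals S(w). -/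
attribute [local instance] Classical.propDecidable
set_option linter.unusedSectionVars false
set_option linter.unusedTactic false
open CoxeterSystem List

namespace CoxAux

variable {B : Type*} {M : CoxeterMatrix B} {W : Type*} [Group W] (cs : CoxeterSystem M W)

local prefix:100 "σ" => cs.simple
local prefix:100 "π" => cs.wordProd
local prefix:100 "ℓ" => cs.length
local prefix:100 "ris" => cs.rightInvSeq

/-! ### parity weight of an element in a list -/

/-- The number of occurrences of `t` in `l`, mod 2. -/
noncomputable def wt (t : W) (l : List W) : ZMod 2 := (l.map (fun u => if u = t then (1 : ZMod 2) else 0)).sum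

lemma wt_nil (t : W) : wt t ([] : List W) = 0 := rfl

lemma wt_cons (t u : W) (l : List W) :
    wt t (u :: l) = (if u = t then (1 : ZMod 2) else 0) + wt t l := by
  simp [wt]

lemma wt_append (t : W) (l₁ l₂ : List W) : wt t (l₁ ++ l₂) = wt t l₁ + wt t l₂ := by
  simp [wt]

lemma wt_singleton (t u : W) : wt t [u] = if u = t then (1 : ZMod 2) else 0 := by
  simp [wt]

lemma wt_eq_zero_of_not_mem {t : W} {l : List W} (h : t ∉ l) : wt t l = 0 := by
  induction l with
  | nil => rfl
  | cons u l ih =>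
      rw [wt_cons, if_neg (by rintro rfl; exact h mem_cons_self),
        ih (fun hm => h (mem_cons_of_mem u hm)), add_zero]

lemma mem_of_wt_ne_zero {t : W} {l : List W} (h : wt t l ≠ 0) : t ∈ l := by
  by_contra hm; exact h (wt_eq_zero_of_not_mem hm)

lemma wt_eq_one_of_nodup_mem {t : W} {l : List W} (hn : l.Nodup) (h : t ∈ l) : wt t l = 1 := by
  induction l with
  | nil => simp at h
  | cons u l ih =>
      rw [wt_cons]
      rcases mem_cons.mp h with rfl | h'
      · rw [if_pos rfl, wt_eq_zero_of_not_mem (nodup_cons.mp hn).1, add_zero]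
      · rw [ih (nodup_cons.mp hn).2 h', if_neg, zero_add]
        rintro rfl
        exact (nodup_cons.mp hn).1 h'

lemma wt_map_conj (t c : W) (l : List W) :
    wt t (l.map (fun u => c⁻¹ * u * c)) = wt (c * t * c⁻¹) l := by
  induction l with
  | nil => rfl
  | cons u l ih =>
      rw [List.map_cons, wt_cons, wt_cons, ih]
      congr 1
      have : (c⁻¹ * u * c = t) ↔ (u = c * t * c⁻¹) := by
        constructor
        · rintro rfl; group
        · rintro rfl; group
      simp [this]

/-! ### The parity representation -/

/-- Underlying function of the parity permutation attached to `i`. -/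
noncomputable def etaFun (i : B) : W × ZMod 2 → W × ZMod 2 :=
  fun p => (cs.simple i * p.1 * cs.simple i, p.2 + if p.1 = cs.simple i then 1 else 0)

lemma etaFun_involutive (i : B) : Function.Involutive (etaFun cs i) := by
  intro p
  have hiff : (σ i * p.1 * σ i = σ i) ↔ (p.1 = σ i) := by
    constructor
    · intro h
      have := congrArg (fun z => σ i * z * σ i) h
      simpa [mul_assoc] using this
    · intro h; rw [h]; simp
  have h2 : ∀ a : ZMod 2, a + a = 0 := by decide
  simp only [etaFun]
  ext
  · simp [mul_assoc]
  · simp only [hiff]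
    show p.2 + (if p.1 = σ i then (1:ZMod 2) else 0) + (if p.1 = σ i then (1:ZMod 2) else 0) = p.2
    rw [add_assoc, h2, add_zero]

/-- The parity permutation attached to `i`. -/
noncomputable def eta (i : B) : Equiv.Perm (W × ZMod 2) := (etaFun_involutive cs i).toPerm

lemma eta_apply (i : B) (p : W × ZMod 2) :
    eta cs i p = (cs.simple i * p.1 * cs.simple i, p.2 + if p.1 = cs.simple i then 1 else 0) := rfl

lemma rightInvSeq_cons (i : B) (ω : List B) :
    cs.rightInvSeq (i :: ω) = ((π ω)⁻¹ * (σ i) * (π ω)) :: cs.rightInvSeq ω := rfl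

lemma prod_map_eta (ω : List B) (t : W) (e : ZMod 2) :
    ((ω.map (eta cs)).prod) (t, e) = (π ω * t * (π ω)⁻¹, e + wt t (ris ω)) := by
  induction ω generalizing t e with
  | nil => simp [wt_nil]
  | cons i ω ih =>
      rw [List.map_cons, List.prod_cons, Equiv.Perm.mul_apply, ih, eta_apply]
      rw [rightInvSeq_cons, wt_cons]
      have hcond : (π ω * t * (π ω)⁻¹ = σ i) ↔ ((π ω)⁻¹ * σ i * π ω = t) := by
        constructor
        · rintro h; rw [← h]; group
        · rintro rfl; group
      ext
      · show σ i * (π ω * t * (π ω)⁻¹) * σ i = π (i :: ω) * t * (π (i :: ω))⁻¹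
        rw [cs.wordProd_cons]
        rw [mul_inv_rev, cs.inv_simple]
        group
      · show e + wt t (ris ω) + (if π ω * t * (π ω)⁻¹ = σ i then 1 else 0) = _
        simp only [hcond]
        ring

lemma alt_two_step (i j : B) (m : ℕ) :
    alternatingWord i j (2*(m+1)) = i :: j :: alternatingWord i j (2*m) := by
  have h1 : 2*(m+1) = (2*m+1)+1 := by ring
  rw [h1, alternatingWord_succ' i j (2*m+1), alternatingWord_succ' i j (2*m)]
  have : ¬ Even (2*m+1) := by simp [Nat.even_add_one, parity_simps]
  rw [if_neg this, if_pos (by simp [parity_simps])]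

lemma sj_pow (i j : B) (k : ℕ) : σ j * (σ i * σ j)^k = (σ j * σ i)^k * σ j := by
  induction k with
  | zero => simp
  | succ k ih =>
      rw [pow_succ, ← mul_assoc, ← mul_assoc, ih, pow_succ]
      group

lemma prod_alt_even (i j : B) (k : ℕ) : π (alternatingWord i j (2*k)) = (σ i * σ j)^k := by
  rw [cs.prod_alternatingWord_eq_mul_pow]
  rw [if_pos (by simp [parity_simps])]
  rw [one_mul]
  congr 1
  omega

lemma ris_alternating (i j : B) (k : ℕ) :
    cs.rightInvSeq (alternatingWord i j (2*k)) =
      (List.range (2*k)).map (fun q => (σ j * σ i)^(2*k-1-q) * σ j) := by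
  induction k with
  | zero => rw [Nat.mul_zero]; simp [alternatingWord]
  | succ k ih =>
      rw [alt_two_step]
      rw [rightInvSeq_cons, rightInvSeq_cons, ih]
      have hπ : π (alternatingWord i j (2*k)) = (σ i * σ j)^k := prod_alt_even cs i j k
      have hπinv : (π (alternatingWord i j (2*k)))⁻¹ = (σ j * σ i)^k := by
        rw [hπ, ← inv_pow]
        congr 1
        rw [mul_inv_rev]
        simp
      have hconj : σ j * π (alternatingWord i j (2*k)) = (σ j * σ i)^k * σ j := by
        rw [hπ]; exact sj_pow cs i j k
      have e1 : (π (j :: alternatingWord i j (2*k)))⁻¹ * σ i * π (j :: alternatingWord i j (2*k))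
          = (σ j * σ i)^(2*k+1) * σ j := by
        rw [cs.wordProd_cons, mul_inv_rev, cs.inv_simple, hπinv, hconj]
        have : (σ j * σ i)^k * σ j * σ i = (σ j * σ i)^(k+1) := by rw [pow_succ]; group
        calc (σ j * σ i)^k * σ j * σ i * ((σ j * σ i)^k * σ j)
            = ((σ j * σ i)^k * σ j * σ i) * (σ j * σ i)^k * σ j := by group
          _ = (σ j * σ i)^(k+1) * (σ j * σ i)^k * σ j := by rw [this]
          _ = (σ j * σ i)^(2*k+1) * σ j := by
                rw [← pow_add]
                have : k + 1 + k = 2*k+1 := by ring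
                rw [this]
      have e2 : (π (alternatingWord i j (2*k)))⁻¹ * σ j * π (alternatingWord i j (2*k))
          = (σ j * σ i)^(2*k) * σ j := by
        rw [hπinv, mul_assoc, hconj, ← mul_assoc, ← pow_add]
        have : k + k = 2*k := by ring
        rw [this]
      rw [e1, e2]
      have hr : List.range (2*(k+1)) = 0 :: 1 :: (List.range (2*k)).map (Nat.succ ∘ Nat.succ) := by
        have : 2*(k+1) = (2*k+1)+1 := by ring
        rw [this, List.range_succ_eq_map, List.range_succ_eq_map, List.map_cons, List.map_map]
      rw [hr, List.map_cons, List.map_cons, List.map_map]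
      refine List.cons_eq_cons.mpr ⟨?_, List.cons_eq_cons.mpr ⟨?_, ?_⟩⟩
      · have : 2*(k+1)-1-0 = 2*k+1 := by omega
        rw [this]
      · have : 2*(k+1)-1-1 = 2*k := by omega
        rw [this]
      apply List.map_congr_left
      intro q hq
      simp only [Function.comp_apply]
      have hq' : q < 2*k := List.mem_range.mp hq
      have : 2*(k+1)-1-(q.succ.succ) = 2*k-1-q := by omega
      rw [this]

lemma wt_range_even (g x t : W) (m : ℕ) (hg : g^m = 1) :
    wt t ((List.range (2*m)).map (fun q => g^(2*m-1-q) * x)) = 0 := by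
  have h2 : (2:ℕ)*m = m + m := by ring
  rw [h2, List.range_add, List.map_append, List.map_map, wt_append]
  have : ((List.range m).map (fun q => g^(m+m-1-q) * x))
      = (List.range m).map ((fun q => g^(m+m-1-q) * x) ∘ (m + ·)) := by
    apply List.map_congr_left
    intro q hq
    have hq' : q < m := List.mem_range.mp hq
    simp only [Function.comp_apply]
    congr 1
    rcases Nat.eq_zero_or_pos m with rfl | hm
    · omega
    · have e1 : m + m - 1 - q = m + (m - 1 - q) := by omega
      have e2 : m + m - 1 - (m + q) = m - 1 - q := by omega
      rw [e1, e2, pow_add, hg, one_mul]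
  rw [this]
  have h2' : ∀ a : ZMod 2, a + a = 0 := by decide
  exact h2' _

lemma pow_eq_prod_map_eta (i j : B) (m : ℕ) :
    (eta cs i * eta cs j)^m = ((alternatingWord i j (2*m)).map (eta cs)).prod := by
  induction m with
  | zero => rw [Nat.mul_zero]; simp [alternatingWord]
  | succ m ih =>
      rw [alt_two_step, List.map_cons, List.map_cons, List.prod_cons, List.prod_cons, ← ih,
        pow_succ', mul_assoc]

lemma eta_liftable : M.IsLiftable (eta cs) := by
  intro i j
  apply Equiv.ext
  rintro ⟨t, e⟩
  rw [pow_eq_prod_map_eta, prod_map_eta]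
  have h1 : π (alternatingWord i j (2*(M i j))) = 1 := by
    rw [prod_alt_even, cs.simple_mul_simple_pow]
  have h2 : wt t (cs.rightInvSeq (alternatingWord i j (2 * M i j))) = 0 := by
    rw [ris_alternating]
    exact wt_range_even (σ j * σ i) (σ j) t (M i j) (cs.simple_mul_simple_pow' i j)
  rw [h1, h2]
  simp

/-- The parity representation of the Coxeter group. -/
noncomputable def Phi : W →* Equiv.Perm (W × ZMod 2) := cs.lift ⟨eta cs, eta_liftable cs⟩

lemma Phi_simple (i : B) : Phi cs (σ i) = eta cs i := cs.lift_apply_simple (eta_liftable cs) i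

lemma Phi_wordProd (ω : List B) : Phi cs (π ω) = (ω.map (eta cs)).prod := by
  unfold CoxeterSystem.wordProd
  rw [MonoidHom.map_list_prod, List.map_map]
  congr 1
  apply List.map_congr_left
  intro c _
  exact Phi_simple cs c

/-- `par cs x t` is the mod-2 number of times `t` occurs in the right inversion sequence
of any word for `x`. -/
noncomputable def par (x t : W) : ZMod 2 := ((Phi cs x) (t, 0)).2

lemma par_word (ω : List B) (t : W) : par cs (π ω) t = wt t (ris ω) := by
  rw [par, Phi_wordProd, prod_map_eta, zero_add]

lemma ris_append (a b : List B) :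
    cs.rightInvSeq (a ++ b) =
      (cs.rightInvSeq a).map (fun u => (π b)⁻¹ * u * π b) ++ cs.rightInvSeq b := by
  induction a with
  | nil => simp
  | cons i a ih =>
      rw [List.cons_append, rightInvSeq_cons, rightInvSeq_cons, ih, List.map_cons,
        List.cons_append]
      refine List.cons_eq_cons.mpr ⟨?_, rfl⟩
      rw [cs.wordProd_append, mul_inv_rev]
      group

lemma par_mul (x y t : W) : par cs (x * y) t = par cs y t + par cs x (y * t * y⁻¹) := by
  obtain ⟨a, ha⟩ := cs.wordProd_surjective x
  obtain ⟨b, hb⟩ := cs.wordProd_surjective y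
  rw [← ha, ← hb, ← cs.wordProd_append, par_word, par_word, par_word, ris_append, wt_append,
    wt_map_conj]
  ring

lemma par_one (t : W) : par cs 1 t = 0 := by
  have := par_word cs [] t
  simpa [wt_nil] using this

lemma par_simple (k : B) (t : W) : par cs (σ k) t = if t = σ k then 1 else 0 := by
  have := par_word cs [k] t
  simp only [cs.wordProd_singleton] at this
  rw [this]
  have : cs.rightInvSeq [k] = [σ k] := by
    rw [rightInvSeq_cons]
    simp
  rw [this, wt_singleton]
  simp [eq_comm]

lemma zmod2_cancel {a b : ZMod 2} (h : a + b = 0) : a = b := by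
  revert h; revert a b; decide

lemma par_concat (x : W) (i : B) (t : W) :
    par cs (x * σ i) t = par cs x (σ i * t * σ i) + (if t = σ i then 1 else 0) := by
  rw [par_mul, par_simple, cs.inv_simple, add_comm]

lemma par_peel (x : W) (i : B) (t : W) :
    par cs x t = par cs (x * σ i) (σ i * t * σ i) + (if t = σ i then 1 else 0) := by
  have := par_concat cs (x * σ i) i t
  rwa [cs.simple_mul_simple_cancel_right] at this

/-! ### Exchange and deletion -/

lemma par_simple_of_descent {w : W} {i : B} (h : cs.IsRightDescent w i) : par cs w (σ i) = 1 := by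
  obtain ⟨β, hβred, hβ⟩ := cs.exists_reduced_word' (w * σ i)
  have h0 : par cs (w * σ i) (σ i) = 0 := by
    rw [hβ, par_word]
    apply wt_eq_zero_of_not_mem
    intro hmem
    have hinv := (cs.isRightInversion_of_mem_rightInvSeq hβred hmem).2
    rw [← hβ, cs.simple_mul_simple_cancel_right] at hinv
    have h' : ℓ (w * σ i) < ℓ w := h
    omega
  have hpeel := par_peel cs w i (σ i)
  rw [if_pos rfl, cs.simple_mul_simple_self, one_mul, h0, zero_add] at hpeel
  exact hpeel

lemma mem_ris_of_descent {w : W} {i : B} (ω : List B) (hω : π ω = w)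
    (h : cs.IsRightDescent w i) : σ i ∈ cs.rightInvSeq ω := by
  apply mem_of_wt_ne_zero
  rw [← par_word, hω, par_simple_of_descent cs h]
  decide

lemma exchange {w : W} {i : B} (ω : List B) (hω : π ω = w) (h : cs.IsRightDescent w i) :
    ∃ k, k < ω.length ∧ π (ω.eraseIdx k) = w * σ i := by
  obtain ⟨k, hk, hget⟩ := List.getElem_of_mem (mem_ris_of_descent cs ω hω h)
  have hk' : k < ω.length := by
    have := cs.length_rightInvSeq ω
    omega
  refine ⟨k, hk', ?_⟩
  have hD := cs.wordProd_mul_getD_rightInvSeq ω k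
  rw [List.getD_eq_getElem _ _ hk, hget, hω] at hD
  exact hD.symm

lemma deletion (ω : List B) : ∃ ω', ω'.Sublist ω ∧ π ω' = π ω ∧ cs.IsReduced ω' := by
  generalize hn : ω.length = n
  induction n using Nat.strong_induction_on generalizing ω with
  | _ n ih =>
  by_cases hred : cs.IsReduced ω
  · exact ⟨ω, List.Sublist.refl ω, rfl, hred⟩
  have hstep : ∃ j, j < ω.length ∧ ℓ (π (ω.take (j+1))) < ℓ (π (ω.take j)) := by
    by_contra hcon
    push_neg at hcon
    have hall : ∀ j, j ≤ ω.length → ℓ (π (ω.take j)) = j := by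
      intro j
      induction j with
      | zero => simp
      | succ j ihj =>
          intro hj
          have hj' : j < ω.length := by omega
          have htake : ω.take (j+1) = ω.take j ++ [ω[j]] := by
            rw [List.take_succ, List.getElem?_eq_getElem hj']
            rfl
          have hge := hcon j hj'
          have hπt : π (ω.take (j+1)) = π (ω.take j) * σ (ω[j]) := by
            rw [htake, cs.wordProd_append, cs.wordProd_singleton]
          have hj'' := ihj (by omega)
          rcases cs.length_mul_simple (π (ω.take j)) (ω[j]) with hh | hh <;>
            rw [hπt] at hge ⊢ <;> omega
    have : cs.IsReduced ω := by
      have h := hall ω.length le_rfl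
      rw [List.take_length] at h
      exact h
    exact hred this
  obtain ⟨j, hj, hdrop⟩ := hstep
  have htake : ω.take (j+1) = ω.take j ++ [ω[j]] := by
    rw [List.take_succ, List.getElem?_eq_getElem hj]
    rfl
  have hπtake : π (ω.take (j+1)) = π (ω.take j) * σ (ω[j]) := by
    rw [htake, cs.wordProd_append, cs.wordProd_singleton]
  have hdes : cs.IsRightDescent (π (ω.take j)) (ω[j]) := by
    show ℓ (π (ω.take j) * σ (ω[j])) < ℓ (π (ω.take j))
    rw [← hπtake]
    exact hdrop
  obtain ⟨k, hk, hπk⟩ := exchange cs (ω.take j) rfl hdes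
  have hπ'' : π ((ω.take j).eraseIdx k ++ ω.drop (j+1)) = π ω := by
    rw [cs.wordProd_append, hπk, ← hπtake, ← cs.wordProd_append, List.take_append_drop]
  have hsub'' : ((ω.take j).eraseIdx k ++ ω.drop (j+1)).Sublist ω := by
    have h1 : ((ω.take j).eraseIdx k).Sublist (ω.take (j+1)) := by
      refine List.Sublist.trans (List.eraseIdx_sublist _ k) ?_
      rw [htake]
      exact List.sublist_append_left _ _
    have h2 := List.Sublist.append h1 (List.Sublist.refl (ω.drop (j+1)))
    rw [List.take_append_drop] at h2
    exact h2
  have hkj : k < j := by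
    have hlt : (ω.take j).length = j := by
      rw [List.length_take]
      omega
    omega
  have hlen'' : ((ω.take j).eraseIdx k ++ ω.drop (j+1)).length < n := by
    rw [List.length_append, List.length_eraseIdx, List.length_take, List.length_drop]
    have : min j ω.length = j := by omega
    rw [this, if_pos (by omega)]
    omega
  obtain ⟨ω', hsub, hπ', hred'⟩ := ih _ hlen'' _ rfl
  exact ⟨ω', hsub.trans hsub'', by rw [hπ', hπ''], hred'⟩

/-! ### Standard parabolic subgroups -/

variable {A : Set B}

lemma mem_closure_iff_word {x : W} :
    x ∈ Subgroup.closure (cs.simple '' A) ↔ ∃ ω : List B, (∀ c ∈ ω, c ∈ A) ∧ π ω = x := by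
  constructor
  · intro hx
    refine Subgroup.closure_induction ?_ ?_ ?_ ?_ hx
    · rintro y ⟨i, hi, rfl⟩
      exact ⟨[i], by simpa using hi, cs.wordProd_singleton i⟩
    · exact ⟨[], by simp, cs.wordProd_nil⟩
    · rintro y z _ _ ⟨ωy, hωy, rfl⟩ ⟨ωz, hωz, rfl⟩
      refine ⟨ωy ++ ωz, ?_, cs.wordProd_append ωy ωz⟩
      intro c hc
      rcases List.mem_append.mp hc with h | h
      exacts [hωy c h, hωz c h]
    · rintro y _ ⟨ωy, hωy, rfl⟩
      exact ⟨ωy.reverse, fun c hc => hωy c (List.mem_reverse.mp hc),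
        by rw [cs.wordProd_reverse]⟩
  · rintro ⟨ω, hω, rfl⟩
    show List.prod (ω.map cs.simple) ∈ _
    apply Subgroup.list_prod_mem
    intro y hy
    obtain ⟨c, hc, rfl⟩ := List.mem_map.mp hy
    exact Subgroup.subset_closure ⟨c, hω c hc, rfl⟩

lemma exists_reduced_word_over {x : W} (hx : x ∈ Subgroup.closure (cs.simple '' A)) :
    ∃ ω : List B, (∀ c ∈ ω, c ∈ A) ∧ cs.IsReduced ω ∧ π ω = x := by
  obtain ⟨ω, hω, rfl⟩ := (mem_closure_iff_word cs).mp hx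
  obtain ⟨ω', hsub, hπ, hred⟩ := deletion cs ω
  exact ⟨ω', fun c hc => hω c (hsub.subset hc), hred, hπ⟩

lemma simple_mem_of_descent {x : W} (hx : x ∈ Subgroup.closure (cs.simple '' A)) {c : B}
    (h : cs.IsRightDescent x c) : ∃ j ∈ A, σ j = σ c := by
  obtain ⟨ξ, hAξ, hredξ, hπξ⟩ := exists_reduced_word_over cs hx
  obtain ⟨k, hk, hπk⟩ := exchange cs ξ hπξ h
  have hmem : σ c ∈ Subgroup.closure (cs.simple '' A) := by
    have h1 : π (ξ.eraseIdx k) ∈ Subgroup.closure (cs.simple '' A) :=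
      (mem_closure_iff_word cs).mpr
        ⟨ξ.eraseIdx k, fun d hd => hAξ d ((List.eraseIdx_sublist ξ k).subset hd), rfl⟩
    have h2 : σ c = x⁻¹ * π (ξ.eraseIdx k) := by
      rw [hπk]
      group
    rw [h2]
    exact mul_mem (inv_mem hx) h1
  obtain ⟨ζ, hAζ, hredζ, hπζ⟩ := exists_reduced_word_over cs hmem
  have hlen : ζ.length = 1 := by
    have := hredζ
    rw [CoxeterSystem.IsReduced, hπζ, cs.length_simple] at this
    omega
  obtain ⟨j, rfl⟩ := List.length_eq_one_iff.mp hlen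
  refine ⟨j, hAζ j (List.mem_singleton_self j), ?_⟩
  rw [← cs.wordProd_singleton, hπζ]

lemma simple_mem_of_leftDescent {x : W} (hx : x ∈ Subgroup.closure (cs.simple '' A)) {c : B}
    (h : cs.IsLeftDescent x c) : ∃ j ∈ A, σ j = σ c :=
  simple_mem_of_descent cs (inv_mem hx) (cs.isRightDescent_inv_iff.mpr h)

lemma letters_of_reduced :
    ∀ ω : List B, cs.IsReduced ω → π ω ∈ Subgroup.closure (cs.simple '' A) →
      ∀ c ∈ ω, ∃ j ∈ A, σ j = σ c := by
  intro ω
  induction ω with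
  | nil => intro _ _ c hc; simp at hc
  | cons i ω ih =>
      intro hred hmem c hc
      have hlen : ℓ (π (i :: ω)) = ω.length + 1 := by
        rw [hred]; simp
      have hld : cs.IsLeftDescent (π (i :: ω)) i := by
        show ℓ (σ i * π (i :: ω)) < ℓ (π (i :: ω))
        rw [cs.wordProd_cons, cs.simple_mul_simple_cancel_left]
        calc ℓ (π ω) ≤ ω.length := cs.length_wordProd_le ω
          _ < ℓ (π (i :: ω)) := by omega
      obtain ⟨j, hjA, hj⟩ := simple_mem_of_leftDescent cs hmem hld
      rcases List.mem_cons.mp hc with rfl | hc'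
      · exact ⟨j, hjA, hj⟩
      · have htail_mem : π ω ∈ Subgroup.closure (cs.simple '' A) := by
          have : π ω = (σ j)⁻¹ * π (i :: ω) := by
            rw [hj, cs.wordProd_cons, cs.inv_simple, cs.simple_mul_simple_cancel_left]
          rw [this]
          exact mul_mem (inv_mem (Subgroup.subset_closure ⟨j, hjA, rfl⟩)) hmem
        have htail_red : cs.IsReduced ω := by
          have h1 : ℓ (π ω) ≤ ω.length := cs.length_wordProd_le ω
          have h2 : ℓ (π (i :: ω)) ≤ ℓ (σ i) + ℓ (π ω) := by
            rw [cs.wordProd_cons]; exact cs.length_mul_le _ _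
          rw [cs.length_simple] at h2
          show ℓ (π ω) = ω.length
          omega
        exact ih htail_red htail_mem c hc'

lemma coset_min_mul (x u : W) (hu : ∃ p ∈ Subgroup.closure (cs.simple '' A), u = x * p)
    (hmin : ∀ p ∈ Subgroup.closure (cs.simple '' A), ℓ u ≤ ℓ (x * p)) :
    ∀ v ∈ Subgroup.closure (cs.simple '' A), ℓ (u * v) = ℓ u + ℓ v := by
  intro v hv
  obtain ⟨p₀, hp₀, rfl⟩ := hu
  obtain ⟨ωu, hredu, hπu⟩ := cs.exists_reduced_word' (x * p₀)
  obtain ⟨ωv, hAv, hredv, hπv⟩ := exists_reduced_word_over cs hv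
  obtain ⟨ξ, hsub, hπξ, hredξ⟩ := deletion cs (ωu ++ ωv)
  obtain ⟨ξ₁, ξ₂, rfl, hs1, hs2⟩ := List.sublist_append_iff.mp hsub
  have hπ12 : π ξ₁ * π ξ₂ = (x * p₀) * v := by
    rw [← cs.wordProd_append, hπξ, cs.wordProd_append, ← hπu, hπv]
  have hξ₂P : π ξ₂ ∈ Subgroup.closure (cs.simple '' A) :=
    (mem_closure_iff_word cs).mpr ⟨ξ₂, fun c hc => hAv c (hs2.subset hc), rfl⟩
  have hlen1 : ℓ (x * p₀) ≤ ℓ (π ξ₁) := by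
    have hcoset : π ξ₁ = x * (p₀ * v * (π ξ₂)⁻¹) := by
      rw [← mul_assoc, ← mul_assoc]
      rw [← hπ12]
      group
    rw [hcoset]
    exact hmin _ (mul_mem (mul_mem hp₀ hv) (inv_mem hξ₂P))
  have hωulen : ℓ (x * p₀) = ωu.length := by
    rw [hπu]; exact hredu
  have hξ₁len : ξ₁.length = ωu.length := by
    have h1 := hs1.length_le
    have h2 := cs.length_wordProd_le ξ₁
    omega
  have hξ₁ : ξ₁ = ωu := hs1.eq_of_length hξ₁len
  have hπξ₂ : π ξ₂ = v := by
    have : π ξ₁ = x * p₀ := by rw [hξ₁, ← hπu]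
    rw [this] at hπ12
    exact mul_left_cancel hπ12
  have hmain : ℓ ((x * p₀) * v) = ξ₁.length + ξ₂.length := by
    have hx1 : π (ξ₁ ++ ξ₂) = x * p₀ * v := by rw [cs.wordProd_append, hπ12]
    have h := hredξ
    rw [CoxeterSystem.IsReduced, hx1, List.length_append] at h
    exact h
  have hv2 : ℓ v ≤ ξ₂.length := by
    rw [← hπξ₂]; exact cs.length_wordProd_le ξ₂
  have hle := cs.length_mul_le (x * p₀) v
  omega

/-! ### theta lemmas -/

lemma theta_wordProd (θ : W ≃* W) (f : B → B) (hf : ∀ i, θ (cs.simple i) = cs.simple (f i))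
    (ω : List B) : θ (π ω) = π (ω.map f) := by
  induction ω with
  | nil => simp
  | cons i ω ih => rw [cs.wordProd_cons, map_mul, hf, ih, List.map_cons, cs.wordProd_cons]

lemma theta_length (θ : W ≃* W) (hθ : ∀ w : W, θ (θ w) = w) (f : B → B)
    (hf : ∀ i, θ (cs.simple i) = cs.simple (f i)) (x : W) : ℓ (θ x) = ℓ x := by
  have hle : ∀ y : W, ℓ (θ y) ≤ ℓ y := by
    intro y
    obtain ⟨ω, hred, hπ⟩ := cs.exists_reduced_word' y
    rw [hπ, theta_wordProd cs θ f hf]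
    calc ℓ (π (ω.map f)) ≤ (ω.map f).length := cs.length_wordProd_le _
      _ = ω.length := List.length_map f
      _ = ℓ (π ω) := hred.symm
  refine le_antisymm (hle x) ?_
  have := hle (θ x)
  rwa [hθ] at this

/-! ### The main structural lemma: `w` lies in the parabolic of its descent set -/

lemma w_mem_parabolic (θ : W ≃* W) (hθ : ∀ w : W, θ (θ w) = w) (f : B → B)
    (hf : ∀ i, θ (cs.simple i) = cs.simple (f i)) {w : W} (hw : θ w = w⁻¹)
    (hpass : ∀ i : B, cs.IsRightDescent w i → ∃ j : B, w * cs.simple i = cs.simple j * w) :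
    w ∈ Subgroup.closure (cs.simple '' {i | cs.IsRightDescent w i}) := by
  set J : Set B := {i | cs.IsRightDescent w i} with hJ
  set K : Set B := {i | cs.IsLeftDescent w i} with hK
  set P := Subgroup.closure (cs.simple '' J) with hP
  set Q := Subgroup.closure (cs.simple '' K) with hQ
  have hKJ : ∀ k ∈ K, f k ∈ J := by
    intro k hk
    have h1 : ℓ (σ k * w) < ℓ w := hk
    have h2 : θ (σ k * w) = σ (f k) * w⁻¹ := by rw [map_mul, hf, hw]
    have h3 : ℓ (σ (f k) * w⁻¹) < ℓ w := by
      rw [← h2, theta_length cs θ hθ f hf]; exact h1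
    show cs.IsRightDescent w (f k)
    show ℓ (w * σ (f k)) < ℓ w
    have h4 : (σ (f k) * w⁻¹)⁻¹ = w * σ (f k) := by rw [mul_inv_rev, inv_inv, cs.inv_simple]
    rw [← h4, cs.length_inv]
    exact h3
  have hJK : ∀ i ∈ J, f i ∈ K := by
    intro i hi
    have h1 : ℓ (w * σ i) < ℓ w := hi
    have h2 : θ (w * σ i) = w⁻¹ * σ (f i) := by rw [map_mul, hf, hw]
    have h3 : ℓ (w⁻¹ * σ (f i)) < ℓ w := by
      rw [← h2, theta_length cs θ hθ f hf]; exact h1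
    show cs.IsLeftDescent w (f i)
    show ℓ (σ (f i) * w) < ℓ w
    have h4 : (w⁻¹ * σ (f i))⁻¹ = σ (f i) * w := by rw [mul_inv_rev, inv_inv, cs.inv_simple]
    rw [← h4, cs.length_inv]
    exact h3
  have hconj : ∀ p ∈ P, w * p * w⁻¹ ∈ Q := by
    have haux : ∀ ω : List B, (∀ c ∈ ω, c ∈ J) → w * (π ω) * w⁻¹ ∈ Q := by
      intro ω
      induction ω with
      | nil => intro _; simpa using one_mem Q
      | cons i ω ih =>
          intro hmem
          have hiJ : i ∈ J := hmem i List.mem_cons_self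
          obtain ⟨j, hj⟩ := hpass i hiJ
          have hji : w * σ i * w⁻¹ = σ j := by rw [hj]; group
          have hjK : j ∈ K := by
            show ℓ (σ j * w) < ℓ w
            rw [← hj]
            exact hiJ
          have hsplit : w * π (i :: ω) * w⁻¹ = (w * σ i * w⁻¹) * (w * π ω * w⁻¹) := by
            rw [cs.wordProd_cons]; group
          rw [hsplit, hji]
          exact mul_mem (Subgroup.subset_closure ⟨j, hjK, rfl⟩)
            (ih (fun c hc => hmem c (List.mem_cons_of_mem i hc)))
    intro p hp
    obtain ⟨ω, hω, rfl⟩ := (mem_closure_iff_word cs).mp hp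
    exact haux ω hω
  have hθQP : ∀ q ∈ Q, θ q ∈ P := by
    intro q hq
    obtain ⟨ω, hω, rfl⟩ := (mem_closure_iff_word cs).mp hq
    rw [theta_wordProd cs θ f hf]
    apply (mem_closure_iff_word cs).mpr
    refine ⟨ω.map f, ?_, rfl⟩
    intro c hc
    obtain ⟨d, hd, rfl⟩ := List.mem_map.mp hc
    exact hKJ d (hω d hd)
  -- minimal length representative of the coset w•P
  have hSne : ∃ n, ∃ p ∈ P, n = ℓ (w * p) := ⟨ℓ (w * 1), 1, one_mem P, rfl⟩
  obtain ⟨p₀, hp₀, hn₀⟩ := Nat.sInf_mem hSne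
  set u := w * p₀ with hu
  have hminu : ∀ p ∈ P, ℓ u ≤ ℓ (w * p) := by
    intro p hp
    rw [hu, ← hn₀]
    exact Nat.sInf_le ⟨p, hp, rfl⟩
  have Fu : ∀ v ∈ P, ℓ (u * v) = ℓ u + ℓ v :=
    coset_min_mul cs w u ⟨p₀, hp₀, rfl⟩ hminu
  -- minimal length representative of the coset w⁻¹•Q
  have hSne' : ∃ n, ∃ q ∈ Q, n = ℓ (w⁻¹ * q) := ⟨ℓ (w⁻¹ * 1), 1, one_mem Q, rfl⟩
  obtain ⟨q₀, hq₀, hn₀'⟩ := Nat.sInf_mem hSne'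
  set u'' := w⁻¹ * q₀ with hu''
  have hminu'' : ∀ q ∈ Q, ℓ u'' ≤ ℓ (w⁻¹ * q) := by
    intro q hq
    rw [hu'', ← hn₀']
    exact Nat.sInf_le ⟨q, hq, rfl⟩
  have Fu'' : ∀ q ∈ Q, ℓ (u'' * q) = ℓ u'' + ℓ q :=
    coset_min_mul cs w⁻¹ u'' ⟨q₀, hq₀, rfl⟩ hminu''
  -- length of w splits along u''
  have hℓw : ℓ w = ℓ u'' + ℓ q₀ := by
    have h2 : ℓ (u'' * q₀⁻¹) = ℓ u'' + ℓ q₀⁻¹ := Fu'' q₀⁻¹ (inv_mem hq₀)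
    have h4 : w⁻¹ = u'' * q₀⁻¹ := by rw [hu'']; group
    calc ℓ w = ℓ w⁻¹ := (cs.length_inv w).symm
      _ = ℓ (u'' * q₀⁻¹) := by rw [h4]
      _ = ℓ u'' + ℓ q₀⁻¹ := h2
      _ = ℓ u'' + ℓ q₀ := by rw [cs.length_inv]
  -- u⁻¹ lies in the coset w⁻¹•Q
  have hx₀ : w * p₀ * w⁻¹ ∈ Q := hconj p₀ hp₀
  have huinv : u⁻¹ = w⁻¹ * (w * p₀ * w⁻¹)⁻¹ := by rw [hu]; group
  have hle1 : ℓ u'' ≤ ℓ u := by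
    have := hminu'' _ (inv_mem hx₀)
    rw [← huinv, cs.length_inv] at this
    exact this
  -- θ u'' lies in the coset w•P
  have hθu'' : θ u'' = w * θ q₀ := by
    rw [hu'', map_mul, map_inv, hw, inv_inv]
  have hle2 : ℓ u ≤ ℓ u'' := by
    have h1 := hminu (θ q₀) (hθQP q₀ hq₀)
    rw [← hθu'', theta_length cs θ hθ f hf] at h1
    exact h1
  have hlu : ℓ u = ℓ u'' := le_antisymm hle2 hle1
  -- conclude u⁻¹ = u''
  have hq₂ : u''⁻¹ * u⁻¹ ∈ Q := by
    have : u''⁻¹ * u⁻¹ = q₀⁻¹ * (w * p₀ * w⁻¹)⁻¹ := by rw [hu'', huinv]; group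
    rw [this]
    exact mul_mem (inv_mem hq₀) (inv_mem hx₀)
  have hq₂len : ℓ (u'' * (u''⁻¹ * u⁻¹)) = ℓ u'' + ℓ (u''⁻¹ * u⁻¹) := Fu'' _ hq₂
  have hq₂one : u''⁻¹ * u⁻¹ = 1 := by
    have h1 : u'' * (u''⁻¹ * u⁻¹) = u⁻¹ := by group
    rw [h1, cs.length_inv, hlu] at hq₂len
    have h2 : ℓ (u''⁻¹ * u⁻¹) = 0 := by omega
    exact cs.length_eq_zero_iff.mp h2
  have huu : u⁻¹ = u'' := by
    have := congrArg (fun z => u'' * z) hq₂one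
    simpa [mul_assoc] using this
  -- w = q₀ * u, with additive lengths
  rw [← huu] at hu''
  have hwq : w = q₀ * u := by
    have h6 := congrArg Inv.inv hu''
    simp only [mul_inv_rev, inv_inv] at h6
    rw [h6]
    group
  have hℓw' : ℓ w = ℓ u + ℓ q₀ := by rw [hℓw, hlu]
  -- if u ≠ 1, a right descent of u would also be a right descent of w; contradiction
  have hu1 : u = 1 := by
    by_contra hu1
    obtain ⟨c, hc⟩ := cs.exists_rightDescent_of_ne_one hu1
    have hc' : ℓ (u * σ c) < ℓ u := hc
    have hcJ : c ∈ J := by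
      show ℓ (w * σ c) < ℓ w
      have h1 : w * σ c = q₀ * (u * σ c) := by rw [hwq]; group
      calc ℓ (w * σ c) = ℓ (q₀ * (u * σ c)) := by rw [h1]
        _ ≤ ℓ q₀ + ℓ (u * σ c) := cs.length_mul_le _ _
        _ < ℓ q₀ + ℓ u := by omega
        _ = ℓ w := by omega
    have := Fu (σ c) (Subgroup.subset_closure ⟨c, hcJ, rfl⟩)
    rw [cs.length_simple] at this
    omega
  -- conclude
  have : w = p₀⁻¹ := by
    have := hu
    rw [hu1] at this
    have h2 := congrArg (fun z => z * p₀⁻¹) this.symm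
    simpa [mul_assoc] using h2
  rw [this]
  exact inv_mem hp₀

/-! ### Maximality -/

lemma par_transfer {w : W}
    (hpass : ∀ i : B, cs.IsRightDescent w i → ∃ j : B, w * cs.simple i = cs.simple j * w) :
    ∀ n : ℕ, ∀ v ∈ Subgroup.closure (cs.simple '' {i | cs.IsRightDescent w i}), ℓ v = n →
      ∀ t : W, par cs v t = 1 → par cs w t = 1 := by
  intro n
  induction n using Nat.strong_induction_on with
  | _ n ih =>
  intro v hv hn t hpar
  by_cases hv1 : v = 1
  · rw [hv1, par_one] at hpar
    exact absurd hpar (by decide)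
  obtain ⟨c, hc⟩ := cs.exists_rightDescent_of_ne_one hv1
  obtain ⟨j, hjJ, hjc⟩ := simple_mem_of_descent cs hv hc
  have hcdesc : ℓ (v * σ j) < ℓ v := by
    rw [hjc]
    exact hc
  have hv' : v * σ j ∈ Subgroup.closure (cs.simple '' {i | cs.IsRightDescent w i}) :=
    mul_mem hv (Subgroup.subset_closure ⟨j, hjJ, rfl⟩)
  have hpar' := par_peel cs v j t
  by_cases ht : t = σ j
  · rw [ht]
    exact par_simple_of_descent cs hjJ
  · rw [if_neg ht, add_zero] at hpar'
    have hr : par cs (v * σ j) (σ j * t * σ j) = 1 := by rw [← hpar']; exact hpar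
    have hIH : par cs w (σ j * t * σ j) = 1 :=
      ih (ℓ (v * σ j)) (by omega) (v * σ j) hv' rfl _ hr
    obtain ⟨j', hj'⟩ := hpass j hjJ
    have h1 := par_peel cs w j t
    rw [if_neg ht, add_zero] at h1
    have h2 : par cs (w * σ j) (σ j * t * σ j) =
        par cs w (σ j * t * σ j) + par cs (σ j') (w * (σ j * t * σ j) * w⁻¹) := by
      rw [hj', par_mul]
    have h3 : par cs (σ j') (w * (σ j * t * σ j) * w⁻¹) = 0 := by
      rw [par_simple, if_neg]
      intro heq
      apply ht
      have hr2 : σ j * t * σ j = w⁻¹ * σ j' * w := by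
        rw [← heq]
        group
      have hj'' : w⁻¹ * σ j' * w = σ j := by
        rw [mul_assoc, ← hj']
        group
      rw [hj''] at hr2
      have := congrArg (fun z => σ j * z * σ j) hr2
      simpa [mul_assoc] using this
    rw [h1, h2, h3, hIH, add_zero]

lemma max_length {w : W}
    (hpass : ∀ i : B, cs.IsRightDescent w i → ∃ j : B, w * cs.simple i = cs.simple j * w) :
    ∀ v ∈ Subgroup.closure (cs.simple '' {i | cs.IsRightDescent w i}), ℓ v ≤ ℓ w := by
  intro v hv
  obtain ⟨γv, hredv, hπv⟩ := cs.exists_reduced_word' v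
  obtain ⟨γw, hredw, hπw⟩ := cs.exists_reduced_word' w
  have hsubset : (cs.rightInvSeq γv).toFinset ⊆ (cs.rightInvSeq γw).toFinset := by
    intro t ht
    rw [List.mem_toFinset] at ht ⊢
    have h1 : wt t (cs.rightInvSeq γv) = 1 :=
      wt_eq_one_of_nodup_mem (hredv.nodup_rightInvSeq) ht
    have h2 : par cs v t = 1 := by rw [hπv, par_word]; exact h1
    have h3 : par cs w t = 1 := par_transfer cs hpass (ℓ v) v hv rfl t h2
    apply mem_of_wt_ne_zero
    rw [← par_word, ← hπw, h3]
    decide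
  have hcard := Finset.card_le_card hsubset
  rw [List.toFinset_card_of_nodup hredv.nodup_rightInvSeq,
    List.toFinset_card_of_nodup hredw.nodup_rightInvSeq,
    cs.length_rightInvSeq, cs.length_rightInvSeq] at hcard
  calc ℓ v = γv.length := by rw [hπv]; exact hredv
    _ ≤ γw.length := hcard
    _ = ℓ w := by rw [hπw]; exact hredw.symm

/-! ### Finiteness helper -/

lemma finite_bounded_lists {α : Type*} {T : Set α} (hT : T.Finite) (n : ℕ) :
    {l : List α | l.length ≤ n ∧ ∀ x ∈ l, x ∈ T}.Finite := by
  induction n with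
  | zero =>
      apply Set.Finite.subset (Set.finite_singleton ([] : List α))
      rintro l ⟨h1, _⟩
      simp only [Nat.le_zero, List.length_eq_zero_iff] at h1
      simp [h1]
  | succ n ihn =>
      apply Set.Finite.subset ((hT.image2 List.cons ihn).insert [])
      rintro l ⟨hlen, hmem⟩
      rcases l with _ | ⟨a, l⟩
      · exact Set.mem_insert _ _
      · refine Set.mem_insert_of_mem _ ?_
        refine Set.mem_image2_of_mem (hmem a List.mem_cons_self) ?_
        exact ⟨by simpa using hlen, fun x hx => hmem x (List.mem_cons_of_mem a hx)⟩

end CoxAux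

open CoxeterSystem List

variable {B : Type*} {M : CoxeterMatrix B} {W : Type*} [Group W]

/-- The support of `w`: the set of generators occurring in some reduced word for `w`. -/
def supportSet (cs : CoxeterSystem M W) (w : W) : Set B :=
  {i : B | ∃ ω : List B, cs.IsReduced ω ∧ cs.wordProd ω = w ∧ i ∈ ω}

/-- if every right descent `s` of `w ∈ 𝕀(θ)` passes through `w`
(i.e. `ws = s̃w` for some `s̃ ∈ S`), then `w` is the longest element of the finite parabolic
subgroup generated by its support, and its right descent set equals its support. -/
theorem longest_of_all_descents_pass (cs : CoxeterSystem M W) (θ : W ≃* W)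
    (hθ : ∀ w : W, θ (θ w) = w) (σ : B → B)
    (hσ : ∀ i : B, θ (cs.simple i) = cs.simple (σ i))
    {w : W} (hw : w ∈ TwistedInvolutions θ)
    (hpass : ∀ i : B, cs.IsRightDescent w i → ∃ j : B, w * cs.simple i = cs.simple j * w) :
    {i : B | cs.IsRightDescent w i} = supportSet cs w ∧
    w ∈ Subgroup.closure (cs.simple '' supportSet cs w) ∧
    (∀ u ∈ Subgroup.closure (cs.simple '' supportSet cs w), cs.length u ≤ cs.length w) ∧
    (Subgroup.closure (cs.simple '' supportSet cs w) : Set W).Finite := by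
  have hw' : θ w = w⁻¹ := hw
  have hwP : w ∈ Subgroup.closure (cs.simple '' {i | cs.IsRightDescent w i}) :=
    CoxAux.w_mem_parabolic cs θ hθ σ hσ hw' hpass
  have hmax : ∀ v ∈ Subgroup.closure (cs.simple '' {i | cs.IsRightDescent w i}),
      cs.length v ≤ cs.length w := CoxAux.max_length cs hpass
  have h1 : {i | cs.IsRightDescent w i} = supportSet cs w := by
    ext i
    constructor
    · intro hi
      obtain ⟨β, hred, hπ⟩ := cs.exists_reduced_word' (w * cs.simple i)
      have hπ2 : cs.wordProd (β ++ [i]) = w := by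
        rw [cs.wordProd_append, cs.wordProd_singleton, ← hπ,
          cs.simple_mul_simple_cancel_right]
      refine ⟨β ++ [i], ?_, hπ2, by simp⟩
      show cs.length (cs.wordProd (β ++ [i])) = (β ++ [i]).length
      rw [hπ2, List.length_append, List.length_singleton]
      have hd : cs.length (w * cs.simple i) + 1 = cs.length w := cs.isRightDescent_iff.mp hi
      have hβ : cs.length (w * cs.simple i) = β.length := by rw [hπ]; exact hred
      omega
    · rintro ⟨ω, hred, hπ, hmem⟩
      obtain ⟨j, hjJ, hj⟩ :=
        CoxAux.letters_of_reduced cs ω hred (by rw [hπ]; exact hwP) i hmem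
      show cs.length (w * cs.simple i) < cs.length w
      rw [← hj]
      exact hjJ
  refine ⟨h1, ?_, ?_, ?_⟩
  · rw [← h1]; exact hwP
  · rw [← h1]; exact hmax
  · rw [← h1]
    obtain ⟨γw, hredw, hπw⟩ := cs.exists_reduced_word' w
    have hFinSimple : (cs.simple '' {i | cs.IsRightDescent w i}).Finite := by
      apply Set.Finite.subset (List.finite_toSet (cs.rightInvSeq γw))
      rintro x ⟨i, hiJ, rfl⟩
      exact CoxAux.mem_ris_of_descent cs γw hπw.symm hiJ
    have hsub : (Subgroup.closure (cs.simple '' {i | cs.IsRightDescent w i}) : Set W) ⊆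
        List.prod '' {l : List W | l.length ≤ cs.length w ∧
          ∀ x ∈ l, x ∈ cs.simple '' {i | cs.IsRightDescent w i}} := by
      intro v hv
      obtain ⟨ξ, hAξ, hredξ, hπξ⟩ := CoxAux.exists_reduced_word_over cs hv
      refine ⟨ξ.map cs.simple, ⟨?_, ?_⟩, ?_⟩
      · rw [List.length_map]
        have h2 : cs.length v = ξ.length := by rw [← hπξ]; exact hredξ
        have h3 := hmax v hv
        omega
      · intro x hx
        obtain ⟨c, hc, rfl⟩ := List.mem_map.mp hx
        exact ⟨c, hAξ c hc, rfl⟩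
      · rw [← hπξ]; rfl
    exact Set.Finite.subset ((CoxAux.finite_bounded_lists hFinSimple (cs.length w)).image _) hsub
end

section
/- Let W be the symmetric group S₄ with simple generators sᵢ = (i,i+1) and w the longest element. For θ = id, the graph G(w,θ) has edges {s₁,s₂} and {s₂,s₃} but not {s₁,s₃} (hence it is connected); for the nontrivial diagram automorphism θ (θ(sᵢ) = s₄₋ᵢ), G(w,θ) has the single edge {s₁,s₃} (hence it is disconnected). -/
open CoxeterSystem List

namespace DescentAux

abbrev P4 := Equiv.Perm (Fin 4)

def tS (i : Fin 3) : P4 := Equiv.swap i.castSucc i.succ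

def pBEq (a b : P4) : Bool :=
  (a 0 == b 0) && (a 1 == b 1) && (a 2 == b 2) && (a 3 == b 3)

lemma pBEq_iff {a b : P4} : pBEq a b = true ↔ a = b := by
  constructor
  · intro h
    simp only [pBEq, Bool.and_eq_true, beq_iff_eq] at h
    ext x
    fin_cases x <;> tauto
  · rintro rfl; simp [pBEq]

def fGen (g : Fin 3 → Fin 3) (w : P4) (i : Fin 3) : P4 :=
  if pBEq (tS (g i) * w * tS i) w then w * tS i else tS (g i) * w * tS i

def allWords : ℕ → List (List (Fin 3))
  | 0 => [[]]
  | n+1 => (allWords n).flatMap fun ω => [0,1,2].map (fun i => i :: ω)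

lemma mem_allWords : ∀ ω : List (Fin 3), ω ∈ allWords ω.length
  | [] => by simp [allWords]
  | i :: ω => by
    simp only [length_cons, allWords, mem_flatMap, List.mem_map]
    exact ⟨ω, mem_allWords ω, i, by fin_cases i <;> simp, rfl⟩

def bad (g : Fin 3 → Fin 3) (n : ℕ) (suf : List (Fin 3)) : Bool :=
  (allWords n).all fun ω => !(pBEq (List.foldl (fGen g) 1 (ω ++ suf)) Fin.revPerm)

lemma bad_spec {g n suf} (h : bad g n suf = true) :
    ∀ ω : List (Fin 3), ω.length = n →
      List.foldl (fGen g) 1 (ω ++ suf) ≠ Fin.revPerm := by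
  intro ω hl heq
  have := List.all_eq_true.mp h ω (hl ▸ mem_allWords ω)
  rw [List.foldl_append] at heq
  simp [heq, pBEq] at this

def gTw : Fin 3 → Fin 3 := fun i => 2 - i

lemma compId1 : List.foldl (fGen id) 1 [2,0,1,0] = Fin.revPerm := pBEq_iff.mp (by rfl)
lemma compId2 : List.foldl (fGen id) 1 [0,1,2,1] = Fin.revPerm := pBEq_iff.mp (by rfl)
lemma compTw : List.foldl (fGen gTw) 1 [0,1,2,0] = Fin.revPerm := pBEq_iff.mp (by rfl)
lemma badId : ∀ n < 4, bad id n [] = true := by decide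
lemma badTw : ∀ n < 4, bad gTw n [] = true := by decide
lemma badId02 : bad id 2 [2,0] = true := by rfl
lemma badTw01 : bad gTw 1 [0,1,0] = true := by rfl
lemma badTw12 : bad gTw 1 [1,2,1] = true := by rfl

lemma aw01 : alternatingWord (1 : Fin 3) 0 ((CoxeterMatrix.Aₙ 3) 0 1) = [0,1,0] := by rfl
lemma aw12 : alternatingWord (2 : Fin 3) 1 ((CoxeterMatrix.Aₙ 3) 1 2) = [1,2,1] := by rfl
lemma aw02 : alternatingWord (2 : Fin 3) 0 ((CoxeterMatrix.Aₙ 3) 0 2) = [2,0] := by rfl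

end DescentAux

attribute [local instance] Classical.propDecidable
open CoxeterSystem List

variable {B : Type*} {M : CoxeterMatrix B} {W : Type*} [Group W]

namespace DescentAux

variable (cs : CoxeterSystem (CoxeterMatrix.Aₙ 3) P4)

lemma twMul_eq (hcs : ∀ i, cs.simple i = tS i) (θ : P4 ≃* P4) (g : Fin 3 → Fin 3)
    (hθ : ∀ i, θ (cs.simple i) = tS (g i)) (w : P4) (i : Fin 3) :
    twMul cs θ w i = fGen g w i := by
  unfold twMul fGen
  rw [hθ i, hcs i]
  simp only [pBEq_iff]
  by_cases h : tS (g i) * w * tS i = w <;> simp [h]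

lemma twWord_eq (hcs : ∀ i, cs.simple i = tS i) (θ : P4 ≃* P4) (g : Fin 3 → Fin 3)
    (hθ : ∀ i, θ (cs.simple i) = tS (g i)) (w : P4) (ω : List (Fin 3)) :
    twWord cs θ w ω = List.foldl (fGen g) w ω := by
  have hf : twMul cs θ = fGen g := funext fun w => funext fun i => twMul_eq cs hcs θ g hθ w i
  unfold twWord
  rw [hf]

lemma twRank_eq (hcs : ∀ i, cs.simple i = tS i) (θ : P4 ≃* P4) (g : Fin 3 → Fin 3)
    (hθ : ∀ i, θ (cs.simple i) = tS (g i)) (wit : List (Fin 3))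
    (hwit : List.foldl (fGen g) 1 wit = Fin.revPerm) (hlen : wit.length = 4)
    (hbad : ∀ n < 4, bad g n [] = true) :
    twRank cs θ Fin.revPerm = 4 := by
  apply IsLeast.csInf_eq
  constructor
  · exact ⟨wit, hlen, by rw [twWord_eq cs hcs θ g hθ]; exact hwit⟩
  · rintro n ⟨ω, rfl, hω⟩
    by_contra hn
    push_neg at hn
    rw [twWord_eq cs hcs θ g hθ] at hω
    exact bad_spec (hbad _ hn) ω rfl (by simpa using hω)

end DescentAux

open DescentAux

/-- in the symmetric group `S₄` with simple generators `sᵢ = (i, i+1)` and `w`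
the longest element, for `θ = id` the graph `G(w,θ)` has exactly the edges `{s₁,s₂}` and
`{s₂,s₃}`, while for the nontrivial diagram automorphism `θ` it has the single edge
`{s₁,s₃}`. -/
theorem descentGraph_S4 (cs : CoxeterSystem (CoxeterMatrix.Aₙ 3) (Equiv.Perm (Fin 4)))
    (hcs : ∀ i : Fin 3, cs.simple i = Equiv.swap i.castSucc i.succ) :
    (IsMaximalS cs (MulEquiv.refl _) Fin.revPerm 0 1 ∧
     IsMaximalS cs (MulEquiv.refl _) Fin.revPerm 1 2 ∧
     ¬ IsMaximalS cs (MulEquiv.refl _) Fin.revPerm 0 2) ∧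
    (∀ θ : Equiv.Perm (Fin 4) ≃* Equiv.Perm (Fin 4),
      (∀ i : Fin 3, θ (cs.simple i) = cs.simple (2 - i)) →
      IsMaximalS cs θ Fin.revPerm 0 2 ∧
      ¬ IsMaximalS cs θ Fin.revPerm 0 1 ∧
      ¬ IsMaximalS cs θ Fin.revPerm 1 2) := by
  have hcs' : ∀ i, cs.simple i = tS i := hcs
  have hθid : ∀ i, (MulEquiv.refl P4) (cs.simple i) = tS (id i) := fun i => hcs' i
  have hrankId : twRank cs (MulEquiv.refl P4) Fin.revPerm = 4 :=
    twRank_eq cs hcs' _ id hθid [0,1,2,1] compId2 rfl badId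
  refine ⟨⟨⟨[2], ?_, ?_⟩, ⟨[0], ?_, ?_⟩, ?_⟩, ?_⟩
  · rw [aw01, twWord_eq cs hcs' _ id hθid]
    exact compId1
  · rw [aw01, hrankId]
    rfl
  · rw [aw12, twWord_eq cs hcs' _ id hθid]
    exact compId2
  · rw [aw12, hrankId]
    rfl
  · rintro ⟨ω, h1, h2⟩
    rw [aw02, twWord_eq cs hcs' _ id hθid] at h1
    rw [aw02, hrankId] at h2
    simp only [List.length_append, List.length_cons, List.length_nil] at h2
    exact bad_spec badId02 ω (by omega) h1
  · intro θ hθ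
    have hθ' : ∀ i, θ (cs.simple i) = tS (gTw i) := fun i => (hθ i).trans (hcs' (2 - i))
    have hrankTw : twRank cs θ Fin.revPerm = 4 :=
      twRank_eq cs hcs' θ gTw hθ' [0,1,2,0] compTw rfl badTw
    refine ⟨⟨[0,1], ?_, ?_⟩, ?_, ?_⟩
    · rw [aw02, twWord_eq cs hcs' θ gTw hθ']
      exact compTw
    · rw [aw02, hrankTw]
      rfl
    · rintro ⟨ω, h1, h2⟩
      rw [aw01, twWord_eq cs hcs' θ gTw hθ'] at h1
      rw [aw01, hrankTw] at h2
      simp only [List.length_append, List.length_cons, List.length_nil] at h2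
      exact bad_spec badTw01 ω (by omega) h1
    · rintro ⟨ω, h1, h2⟩
      rw [aw12, twWord_eq cs hcs' θ gTw hθ'] at h1
      rw [aw12, hrankTw] at h2
      simp only [List.length_append, List.length_cons, List.length_nil] at h2
      exact bad_spec badTw12 ω (by omega) h1
end
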